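/- arXiv:2111.13322 — 3 statements merged into one kernel-verified Lean document; each statement's English description precedes it below -/
import Mathlib

section
/- (Theorem 1: one-epoch contraction of Shuffled-SARAH.) Assume each f_i is convex, P is μ-strongly convex with minimizer w* and optimal value P*, the δ-similarity condition holds, and the step size satisfies 0 < η ≤ min(1/(8nL), 1/(8n²δ)). Fix permutations π and π' of {1,…,n}, a point w_prev ∈ ℝ^d and a vector v_prev ∈ ℝ^d. Run one SARAH epoch with step size η, permutation π, start point w_prev and initial direction v_prev, producing inner iterates w¹_prev,…,wⁿ_prev and epoch output w_cur; set v_cur = (1/n)·Σ_{i=1}^{n} ∇f_{π(i)}(wⁱ_prev). Run a second SARAH epoch with step size η, permutation π', start point w_cur and initial direction v_cur, producing epoch output w_next. Then P(w_next) − P* + (η(n+1)/16)·‖v_cur‖² ≤ (1 − η·μ·(n+1)/2)·(P(w_cur) − P* + (η(n+1)/16)·‖v_prev‖²). -/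
open scoped BigOperators RealInnerProductSpace
open Filter Set Topology Finset

set_option maxHeartbeats 1000000

section AuxLemmas

variable {E : Type*} [NormedAddCommGroup E] [InnerProductSpace ℝ E] [CompleteSpace E]




lemma inner_gradient_eq (f : E → ℝ) (x v : E) :
    ⟪gradient f x, v⟫ = fderiv ℝ f x v := by
  simpa [gradient] using InnerProductSpace.toDual_symm_apply (𝕜 := ℝ) (E := E)

lemma toDual_gradient' (f : E → ℝ) (x : E) :
    InnerProductSpace.toDual ℝ E (gradient f x) = fderiv ℝ f x := by
  simp [gradient]

-- descent-type lemma
lemma descent_lemma (P : E → ℝ) (L : ℝ) (hL : 0 < L) (hdiff : Differentiable ℝ P)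
    (hLip : ∀ a b, ‖gradient P a - gradient P b‖ ≤ L * ‖a - b‖) (x y : E) :
    P y ≤ P x + ⟪gradient P x, y - x⟫ + L * ‖y - x‖ ^ 2 := by
  have key : ‖P y - P x - (fderiv ℝ P x) (y - x)‖ ≤ (L * ‖y - x‖) * ‖y - x‖ := by
    apply Convex.norm_image_sub_le_of_norm_hasFDerivWithin_le'
      (fun z _ => (hdiff z).hasFDerivAt.hasFDerivWithinAt)
      ?_ (convex_segment x y) (left_mem_segment ℝ x y) (right_mem_segment ℝ x y)
    intro z hz
    have h1 : ‖fderiv ℝ P z - fderiv ℝ P x‖ = ‖gradient P z - gradient P x‖ := by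
      rw [← toDual_gradient' P z, ← toDual_gradient' P x, ← map_sub]
      exact (LinearIsometryEquiv.norm_map _ _)
    have h2 : ‖z - x‖ ≤ ‖y - x‖ := by
      have := (mem_segment_iff_wbtw.1 hz).dist_add_dist
      have hz2 : dist x z ≤ dist x y := by
        nlinarith [dist_nonneg (x := z) (y := y)]
      simpa [dist_eq_norm, norm_sub_rev] using hz2
    calc ‖fderiv ℝ P z - fderiv ℝ P x‖ = ‖gradient P z - gradient P x‖ := h1
      _ ≤ L * ‖z - x‖ := hLip z x
      _ ≤ L * ‖y - x‖ := mul_le_mul_of_nonneg_left h2 hL.le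
  rw [Real.norm_eq_abs] at key
  have h2 := (abs_le.1 key).2
  have hval : (fderiv ℝ P x) (y - x) = ⟪gradient P x, y - x⟫ :=
    (inner_gradient_eq P x (y - x)).symm
  rw [hval] at h2
  nlinarith [sq_nonneg ‖y - x‖, sq ‖y - x‖, pow_two ‖y - x‖]



lemma inner_gradient_eq' (f : E → ℝ) (x v : E) :
    ⟪gradient f x, v⟫ = fderiv ℝ f x v := by
  simp only [gradient]
  exact InnerProductSpace.toDual_symm_apply

lemma strong_convex_grad (P : E → ℝ) (μ : ℝ) (hsc : StrongConvexOn Set.univ μ P)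
    (hdiff : Differentiable ℝ P) (x y : E) :
    ⟪gradient P x, y - x⟫ ≤ P y - P x - μ / 2 * ‖y - x‖ ^ 2 := by
  set K : ℝ := μ / 2 * ‖y - x‖ ^ 2 with hK
  set φ : ℝ → E := fun t => x + t • (y - x) with hφ
  have hline : HasDerivAt φ (y - x) 0 := by
    have h1 : HasDerivAt (fun t : ℝ => t • (y - x)) ((1 : ℝ) • (y - x)) 0 :=
      (hasDerivAt_id (0:ℝ)).smul_const (y - x)
    rw [one_smul] at h1
    exact h1.const_add x
  have hc : HasDerivAt (fun t => P (φ t)) (fderiv ℝ P x (y - x)) 0 := by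
    have := ((hdiff (φ 0)).hasFDerivAt).comp_hasDerivAt 0 hline
    have h0 : φ 0 = x := by simp [hφ]
    rw [h0] at this
    exact this
  have hslope := hasDerivAt_iff_tendsto_slope.1 hc
  have hslope' : Tendsto (slope (fun t => P (φ t)) 0) (𝓝[>] 0)
      (𝓝 (fderiv ℝ P x (y - x))) :=
    hslope.mono_left (nhdsWithin_mono 0 (fun t ht => by simpa using ne_of_gt ht))
  have hbnd : ∀ᶠ t in 𝓝[>] (0:ℝ),
      slope (fun t => P (φ t)) 0 t ≤ P y - P x - (1 - t) * K := by
    filter_upwards [Ioc_mem_nhdsGT_of_mem (Set.mem_Ico.2 ⟨le_refl 0, zero_lt_one⟩)]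
      with t ht
    obtain ⟨ht0, ht1⟩ := ht
    have hpt : φ t = (1 - t) • x + t • y := by
      simp [hφ, smul_sub, sub_smul]; abel
    have hsc2 : UniformConvexOn Set.univ (fun r => μ / (2:ℝ) * r ^ 2) P := hsc
    rw [UniformConvexOn] at hsc2
    have hsc' := hsc2.2 (mem_univ x) (mem_univ y) (by linarith : (0:ℝ) ≤ 1 - t)
      ht0.le (by ring)
    rw [← hpt] at hsc'
    have hxy : ‖x - y‖ = ‖y - x‖ := norm_sub_rev x y
    have h0 : φ 0 = x := by simp [hφ]
    have hineq : P (φ t) ≤ (1 - t) * P x + t * P y - (1 - t) * t * K := by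
      rw [hK]
      calc P (φ t) ≤ (1-t) • P x + t • P y - (1-t) * t * (μ / 2 * ‖x - y‖ ^ 2) := hsc'
        _ = (1 - t) * P x + t * P y - (1 - t) * t * (μ / 2 * ‖y - x‖ ^ 2) := by
            rw [hxy]; simp [smul_eq_mul]
    have hsl : slope (fun t => P (φ t)) 0 t = (P (φ t) - P (φ 0)) / t := by
      rw [slope_def_field]; ring
    rw [hsl, h0, div_le_iff₀ ht0]
    nlinarith
  have hlim2 : Tendsto (fun t : ℝ => P y - P x - (1 - t) * K) (𝓝[>] 0)
      (𝓝 (P y - P x - K)) := by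
    have : ContinuousAt (fun t : ℝ => P y - P x - (1 - t) * K) 0 := by fun_prop
    have h2 := this.tendsto.mono_left (nhdsWithin_le_nhds (s := Set.Ioi (0:ℝ)))
    simpa using h2
  have hfinal : fderiv ℝ P x (y - x) ≤ P y - P x - K :=
    le_of_tendsto_of_tendsto hslope' hlim2 hbnd
  rw [inner_gradient_eq']
  linarith



lemma hasGradientAt_avg {n : ℕ} (hn : 0 < n) (f : Fin n → E → ℝ)
    (hdiff : ∀ i, Differentiable ℝ (f i)) (P : E → ℝ)
    (hP : ∀ w, P w = (1 / (n : ℝ)) * ∑ i, f i w) (x : E) :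
    HasGradientAt P ((1 / (n : ℝ)) • ∑ i, gradient (f i) x) x := by
  have hPe : P = fun w => (1 / (n : ℝ)) * ∑ i, f i w := funext hP
  have hsum : HasFDerivAt (fun w => ∑ i, f i w) (∑ i, fderiv ℝ (f i) x) x :=
    HasFDerivAt.fun_sum (fun i _ => (hdiff i x).hasFDerivAt)
  have hfd : HasFDerivAt P ((1 / (n : ℝ)) • ∑ i, fderiv ℝ (f i) x) x := by
    rw [hPe]; exact hsum.const_mul _
  rw [hasGradientAt_iff_hasFDerivAt]
  convert hfd using 1
  · rfl
  rw [map_smul, map_sum]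
  congr 1
  ext i : 1
  simp [gradient]

lemma gradient_avg {n : ℕ} (hn : 0 < n) (f : Fin n → E → ℝ)
    (hdiff : ∀ i, Differentiable ℝ (f i)) (P : E → ℝ)
    (hP : ∀ w, P w = (1 / (n : ℝ)) * ∑ i, f i w) (x : E) :
    gradient P x = (1 / (n : ℝ)) • ∑ i, gradient (f i) x :=
  (hasGradientAt_avg hn f hdiff P hP x).gradient

lemma diff_avg {n : ℕ} (hn : 0 < n) (f : Fin n → E → ℝ)
    (hdiff : ∀ i, Differentiable ℝ (f i)) (P : E → ℝ)
    (hP : ∀ w, P w = (1 / (n : ℝ)) * ∑ i, f i w) :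
    Differentiable ℝ P := fun x =>
  ((hasGradientAt_avg hn f hdiff P hP x).differentiableAt)

lemma lip_avg {n : ℕ} (hn : 0 < n) (f : Fin n → E → ℝ) (L : ℝ)
    (hdiff : ∀ i, Differentiable ℝ (f i)) (P : E → ℝ)
    (hP : ∀ w, P w = (1 / (n : ℝ)) * ∑ i, f i w)
    (hLip : ∀ i a b, ‖gradient (f i) a - gradient (f i) b‖ ≤ L * ‖a - b‖)
    (a b : E) : ‖gradient P a - gradient P b‖ ≤ L * ‖a - b‖ := by
  have hn' : (0:ℝ) < n := by exact_mod_cast hn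
  rw [gradient_avg hn f hdiff P hP a, gradient_avg hn f hdiff P hP b, ← smul_sub,
    ← Finset.sum_sub_distrib, norm_smul]
  have h1 : ‖∑ i, (gradient (f i) a - gradient (f i) b)‖
      ≤ ∑ i : Fin n, L * ‖a - b‖ := by
    refine (norm_sum_le _ _).trans ?_
    exact Finset.sum_le_sum (fun i _ => hLip i a b)
  rw [Finset.sum_const, Finset.card_univ, Fintype.card_fin] at h1
  have : ‖(1 / (n:ℝ))‖ = 1 / (n:ℝ) := by
    rw [Real.norm_eq_abs, abs_of_pos (by positivity)]
  rw [this]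
  calc (1 / (n:ℝ)) * ‖∑ i, (gradient (f i) a - gradient (f i) b)‖
      ≤ (1 / (n:ℝ)) * (n * (L * ‖a - b‖)) := by
        apply mul_le_mul_of_nonneg_left _ (by positivity)
        simpa using h1
    _ = L * ‖a - b‖ := by field_simp



/-- drift bound for a SARAH epoch -/
lemma sarah_drift {n : ℕ} (hn : 1 ≤ n) (η L : ℝ) (hη0 : 0 < η) (hL : 0 < L)
    (hηL : η * L ≤ 1 / (8 * n))
    (G : Fin n → E → E) (hGL : ∀ i a b, ‖G i a - G i b‖ ≤ L * ‖a - b‖)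
    (W V : ℕ → E)
    (hWrec : ∀ i : Fin n, W ((i : ℕ) + 1) = W i - η • V i)
    (hVrec : ∀ i : Fin n, V ((i : ℕ) + 1) = V i + G i (W ((i : ℕ) + 1)) - G i (W i)) :
    ∀ k, k ≤ n → ‖V k - V 0‖ ≤ (k : ℝ) / (7 * n) * ‖V 0‖ := by
  have hn' : (1:ℝ) ≤ n := by exact_mod_cast hn
  intro k
  induction k with
  | zero => intro _; simp
  | succ k ih =>
    intro hk1
    have hk : k < n := Nat.lt_of_succ_le hk1
    have hkn : (k : ℝ) ≤ (n : ℝ) - 1 := by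
      have : (k:ℝ) + 1 ≤ n := by exact_mod_cast hk1
      linarith
    have ihk := ih (Nat.le_of_lt hk)
    set i : Fin n := ⟨k, hk⟩ with hi
    have hW := hWrec i
    have hV := hVrec i
    simp only [hi] at hW hV
    have hstep : ‖V (k+1) - V 0‖ ≤ ‖V k - V 0‖ + L * (η * ‖V k‖) := by
      have : V (k+1) - V 0 = (V k - V 0) + (G i (W (k+1)) - G i (W k)) := by
        rw [hV]; abel
      rw [this]
      refine (norm_add_le _ _).trans ?_
      have h2 : ‖G i (W (k+1)) - G i (W k)‖ ≤ L * ‖W (k+1) - W k‖ := hGL i _ _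
      have h3 : ‖W (k+1) - W k‖ = η * ‖V k‖ := by
        rw [hW]
        have : W k - η • V k - W k = -(η • V k) := by abel
        rw [this, norm_neg, norm_smul, Real.norm_eq_abs, abs_of_pos hη0]
      rw [h3] at h2
      linarith
    have hVk : ‖V k‖ ≤ ‖V 0‖ + ‖V k - V 0‖ := by
      have heq : V k = V 0 + (V k - V 0) := by abel
      calc ‖V k‖ = ‖V 0 + (V k - V 0)‖ := by rw [← heq]
        _ ≤ ‖V 0‖ + ‖V k - V 0‖ := norm_add_le _ _
    have hNn : (0:ℝ) < n := by linarith
    have hV0 : (0:ℝ) ≤ ‖V 0‖ := norm_nonneg _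
    have hk7 : (k:ℝ) / (7 * n) ≤ 1 / 7 := by
      rw [div_le_div_iff₀ (by positivity) (by norm_num)]
      nlinarith
    have hηL' : 0 < η * L := by positivity
    push_cast
    have key : ‖V k - V 0‖ + L * (η * ‖V k‖) ≤ ((k:ℝ) + 1) / (7 * n) * ‖V 0‖ := by
      have hb : ‖V k - V 0‖ ≤ (1/7) * ‖V 0‖ := by
        refine ihk.trans ?_
        exact mul_le_mul_of_nonneg_right hk7 hV0
      have hVk2 : ‖V k‖ ≤ (8/7) * ‖V 0‖ := by linarith
      have h5 : L * (η * ‖V k‖) ≤ (1/(8*(n:ℝ))) * ((8/7) * ‖V 0‖) := by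
        have : L * (η * ‖V k‖) = (η * L) * ‖V k‖ := by ring
        rw [this]
        apply mul_le_mul hηL hVk2 (norm_nonneg _) (by positivity)
      have h6 : (1/(8*(n:ℝ))) * ((8/7) * ‖V 0‖) = 1 / (7*n) * ‖V 0‖ := by
        field_simp
      rw [h6] at h5
      have : ((k:ℝ) + 1) / (7 * n) * ‖V 0‖
          = (k:ℝ) / (7*n) * ‖V 0‖ + 1 / (7*n) * ‖V 0‖ := by ring
      rw [this]
      linarith
    calc ‖V (k+1) - V 0‖ ≤ ‖V k - V 0‖ + L * (η * ‖V k‖) := hstep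
      _ ≤ ((k:ℝ) + 1) / (7 * n) * ‖V 0‖ := key

/-- telescoping for a SARAH epoch -/
lemma sarah_telescope {n : ℕ} (η : ℝ) (W V : ℕ → E)
    (hWrec : ∀ i : Fin n, W ((i : ℕ) + 1) = W i - η • V i) :
    ∀ k, k ≤ n → W k = W 0 - η • ∑ j ∈ range k, V j := by
  intro k
  induction k with
  | zero => intro _; simp
  | succ k ih =>
    intro hk1
    have hk : k < n := Nat.lt_of_succ_le hk1
    have hW := hWrec ⟨k, hk⟩
    simp only at hW
    rw [hW, ih (Nat.le_of_lt hk), sum_range_succ, smul_add]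
    abel


lemma pl_ineq (P : E → ℝ) (μ : ℝ) (hμ : 0 < μ) (hsc : StrongConvexOn Set.univ μ P)
    (hdiff : Differentiable ℝ P) (wstar : E) (u : E) :
    2 * μ * (P u - P wstar) ≤ ‖gradient P u‖ ^ 2 := by
  have h := strong_convex_grad P μ hsc hdiff u wstar
  have hCS : -(‖gradient P u‖ * ‖wstar - u‖) ≤ ⟪gradient P u, wstar - u⟫ :=
    neg_le_of_abs_le (abs_real_inner_le_norm _ _)
  set N := ‖gradient P u‖
  set t := ‖wstar - u‖
  have hN : 0 ≤ N := norm_nonneg _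
  have ht : 0 ≤ t := norm_nonneg _
  nlinarith [sq_nonneg (N - μ * t)]

lemma mu_le_L (P : E → ℝ) (μ L : ℝ) (hμ : 0 < μ) (hsc : StrongConvexOn Set.univ μ P)
    (hdiff : Differentiable ℝ P)
    (hLipP : ∀ a b, ‖gradient P a - gradient P b‖ ≤ L * ‖a - b‖)
    (x0 : E) (hx0 : x0 ≠ 0) : μ ≤ L := by
  have h1 := strong_convex_grad P μ hsc hdiff 0 x0
  have h2 := strong_convex_grad P μ hsc hdiff x0 0
  set t := ‖x0‖ with ht
  have ht0 : 0 < t := norm_pos_iff.2 hx0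
  have hs1 : ‖(0:E) - x0‖ = t := by rw [norm_sub_rev]; simp; exact ht.symm
  rw [sub_zero] at h1
  rw [zero_sub, norm_neg] at h2
  have hadd : ⟪gradient P 0, x0⟫ + ⟪gradient P x0, -x0⟫ ≤ -(μ * t ^ 2) := by
    nlinarith
  have hin : ⟪gradient P x0 - gradient P 0, x0⟫ ≥ μ * t ^ 2 := by
    rw [inner_sub_left]
    have : ⟪gradient P x0, -x0⟫ = -⟪gradient P x0, x0⟫ := by
      rw [inner_neg_right]
    linarith [hadd, this ▸ hadd]
  have hCS : ⟪gradient P x0 - gradient P 0, x0⟫ ≤ ‖gradient P x0 - gradient P 0‖ * t :=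
    real_inner_le_norm _ _
  have hLb : ‖gradient P x0 - gradient P 0‖ ≤ L * t := by
    have := hLipP x0 0
    simpa using this
  nlinarith [mul_le_mul_of_nonneg_right hLb ht0.le, mul_pos ht0 ht0, sq t]

lemma sum_range_cast_real (n : ℕ) : ∑ i ∈ range n, (i : ℝ) = n * (n - 1) / 2 := by
  induction n with
  | zero => simp
  | succ k ih => rw [sum_range_succ, ih]; push_cast; ring

end AuxLemmas


lemma key_algebra (h μ N G e Vp S R Dn L Δ Pn : ℝ)
    (hh : 0 ≤ h) (hμ0 : 0 < μ) (hL0 : 0 < L)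
    (hdesc : Pn ≤ Δ - h * S - R + L * Dn ^ 2)
    (hD : 0 ≤ Dn) (hDle : Dn ≤ (15/14) * h * G)
    (hS1 : N ^ 2 - N * e ≤ S) (hS2 : G ^ 2 - e * G ≤ S)
    (hR : -R ≤ N * (h / 14 * G))
    (hN : N ≤ G + e) (hG : 0 ≤ G) (he0 : 0 ≤ e) (hVp : 0 ≤ Vp) (hN0 : 0 ≤ N)
    (hPL : 2 * μ * Δ ≤ N ^ 2) (hLh : L * h ≤ 1/4) (hμh : μ * h ≤ 1/4)
    (hee : e ≤ Vp / 7) :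
    Pn + h / 16 * G ^ 2 ≤ (1 - h * μ / 2) * (Δ + h / 16 * Vp ^ 2) := by
  have hA : L * Dn ^ 2 ≤ (1/4) * h * ((225/196) * G ^ 2) := by
    have h1 : Dn ^ 2 ≤ ((15/14) * h * G) ^ 2 := by
      apply pow_le_pow_left₀ hD hDle
    have h2 : L * Dn ^ 2 ≤ L * ((15/14) * h * G) ^ 2 :=
      mul_le_mul_of_nonneg_left h1 hL0.le
    nlinarith [mul_nonneg hh (sq_nonneg G), sq_nonneg G]
  have hB : -(h * S) ≤ -(h/4) * (N ^ 2 - N * e) - (3*h/4) * (G ^ 2 - e * G) := by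
    have b1 := mul_le_mul_of_nonneg_left hS1 (by linarith : (0:ℝ) ≤ h/4)
    have b2 := mul_le_mul_of_nonneg_left hS2 (by linarith : (0:ℝ) ≤ 3*h/4)
    nlinarith
  have hC : -R ≤ (G + e) * (h / 14 * G) := by
    have : N * (h / 14 * G) ≤ (G + e) * (h / 14 * G) := by
      apply mul_le_mul_of_nonneg_right hN
      positivity
    linarith
  have hPLh : Δ - h/4 * N ^ 2 ≤ (1 - h * μ / 2) * Δ := by nlinarith
  have hev : e ^ 2 ≤ Vp ^ 2 / 49 := by
    have := pow_le_pow_left₀ he0 hee 2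
    nlinarith
  have hVfin : (37/28) * h * e ^ 2 ≤ (1 - h * μ / 2) * (h / 16 * Vp ^ 2) := by
    have h78 : (7:ℝ)/8 ≤ 1 - h * μ / 2 := by linarith
    have h1 : (37/28) * h * e ^ 2 ≤ (37/28) * h * (Vp ^ 2 / 49) :=
      mul_le_mul_of_nonneg_left hev (by linarith)
    have h2 : (37/28) * h * (Vp ^ 2 / 49) ≤ (7/8) * (h / 16 * Vp ^ 2) := by
      nlinarith [mul_nonneg hh (sq_nonneg Vp)]
    have h3 : (7/8) * (h / 16 * Vp ^ 2) ≤ (1 - h * μ / 2) * (h / 16 * Vp ^ 2) := by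
      apply mul_le_mul_of_nonneg_right h78
      positivity
    linarith
  have hMid : -(h/4) * (N ^ 2 - N * e) - (3*h/4) * (G ^ 2 - e * G)
      + (G + e) * (h / 14 * G) + (1/4) * h * ((225/196) * G ^ 2) + h/16 * G ^ 2
      ≤ -(h/4) * N ^ 2 + (37/28) * h * e ^ 2 := by
    nlinarith [mul_nonneg hh (mul_nonneg (by linarith : (0:ℝ) ≤ G + e - N) he0),
      mul_nonneg hh (sq_nonneg (G/2 - e)), mul_nonneg hh (sq_nonneg G)]
  have hexp : (1 - h * μ / 2) * (Δ + h / 16 * Vp ^ 2)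
      = (1 - h * μ / 2) * Δ + (1 - h * μ / 2) * (h / 16 * Vp ^ 2) := by ring
  rw [hexp]
  linarith

/-- Theorem 1: one-epoch contraction of Shuffled-SARAH. -/
theorem shuffled_sarah_one_epoch_contraction
    {d n : ℕ} (hd : 1 ≤ d) (hn : 1 ≤ n)
    (f : Fin n → EuclideanSpace ℝ (Fin d) → ℝ)
    (P : EuclideanSpace ℝ (Fin d) → ℝ)
    (hP : ∀ w, P w = (1 / (n : ℝ)) * ∑ i, f i w)
    (L μ δ η : ℝ) (hL : 0 < L) (hμ : 0 < μ) (hδ : 0 < δ)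
    (hdiff : ∀ i, Differentiable ℝ (f i))
    (hconv : ∀ i, ConvexOn ℝ Set.univ (f i))
    (hLip : ∀ i w₁ w₂, ‖gradient (f i) w₁ - gradient (f i) w₂‖ ≤ L * ‖w₁ - w₂‖)
    (hsc : StrongConvexOn Set.univ μ P)
    (wstar : EuclideanSpace ℝ (Fin d)) (hmin : IsMinOn P Set.univ wstar)
    (Pstar : ℝ) (hPstar : Pstar = P wstar)
    (hsim : ∀ i w₁ w₂,
      ‖(gradient (f i) w₁ - gradient P w₁) - (gradient (f i) w₂ - gradient P w₂)‖
        ≤ (δ / 2) * ‖w₁ - w₂‖)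
    (hη0 : 0 < η)
    (hη : η ≤ min (1 / (8 * n * L)) (1 / (8 * n ^ 2 * δ)))
    (π π' : Equiv.Perm (Fin n))
    (wprev vprev : EuclideanSpace ℝ (Fin d))
    -- first epoch: start point `wprev`, initial direction `vprev`, permutation `π`
    (W V : ℕ → EuclideanSpace ℝ (Fin d))
    (hW0 : W 0 = wprev) (hV0 : V 0 = vprev)
    (hWrec : ∀ i : Fin n, W ((i : ℕ) + 1) = W i - η • V i)
    (hVrec : ∀ i : Fin n, V ((i : ℕ) + 1)
      = V i + gradient (f (π i)) (W ((i : ℕ) + 1)) - gradient (f (π i)) (W i))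
    (wcur : EuclideanSpace ℝ (Fin d)) (hwcur : wcur = W n - η • V n)
    (vcur : EuclideanSpace ℝ (Fin d))
    (hvcur : vcur = (1 / (n : ℝ)) • ∑ i : Fin n, gradient (f (π i)) (W ((i : ℕ) + 1)))
    -- second epoch: start point `wcur`, initial direction `vcur`, permutation `π'`
    (W' V' : ℕ → EuclideanSpace ℝ (Fin d))
    (hW'0 : W' 0 = wcur) (hV'0 : V' 0 = vcur)
    (hW'rec : ∀ i : Fin n, W' ((i : ℕ) + 1) = W' i - η • V' i)
    (hV'rec : ∀ i : Fin n, V' ((i : ℕ) + 1)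
      = V' i + gradient (f (π' i)) (W' ((i : ℕ) + 1)) - gradient (f (π' i)) (W' i))
    (wnext : EuclideanSpace ℝ (Fin d)) (hwnext : wnext = W' n - η • V' n) :
    P wnext - Pstar + (η * ((n : ℝ) + 1) / 16) * ‖vcur‖ ^ 2
      ≤ (1 - η * μ * ((n : ℝ) + 1) / 2)
        * (P wcur - Pstar + (η * ((n : ℝ) + 1) / 16) * ‖vprev‖ ^ 2) := by
  classical
  have hn0 : 0 < n := hn
  have hnR : (1:ℝ) ≤ (n:ℝ) := by exact_mod_cast hn
  have hnR0 : (0:ℝ) < (n:ℝ) := by linarith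
  -- step size
  have hη1 : η ≤ 1 / (8 * (n:ℝ) * L) := le_trans hη (min_le_left _ _)
  have hηL : η * L ≤ 1 / (8 * (n:ℝ)) := by
    have h1 : η * L ≤ (1 / (8 * (n:ℝ) * L)) * L := mul_le_mul_of_nonneg_right hη1 hL.le
    have h2 : (1 / (8 * (n:ℝ) * L)) * L = 1 / (8 * (n:ℝ)) := by field_simp
    linarith [h2 ▸ h1]
  -- gradient infrastructure
  have hPdiff : Differentiable ℝ P := diff_avg hn0 f hdiff P hP
  have hgradP : ∀ x, gradient P x = (1 / (n : ℝ)) • ∑ i, gradient (f i) x :=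
    fun x => gradient_avg hn0 f hdiff P hP x
  have hLipP : ∀ a b, ‖gradient P a - gradient P b‖ ≤ L * ‖a - b‖ :=
    lip_avg hn0 f L hdiff P hP hLip
  have hx0ne : (EuclideanSpace.single (⟨0, hd⟩ : Fin d) (1:ℝ)) ≠ 0 := by
    intro hcon
    have := congrArg (fun z => ‖z‖) hcon
    simp [EuclideanSpace.norm_single] at this
  have hμL : μ ≤ L := mu_le_L P μ L hμ hsc hPdiff hLipP _ hx0ne
  -- first epoch drift
  have hdrift1 := sarah_drift hn η L hη0 hL hηL (fun i => gradient (f (π i)))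
    (fun i a b => hLip (π i) a b) W V hWrec hVrec
  have hVk : ∀ k, k ≤ n → ‖V k‖ ≤ (8/7) * ‖V 0‖ := by
    intro k hk
    have h1 := hdrift1 k hk
    have hk7 : (k:ℝ) / (7 * (n:ℝ)) ≤ 1 / 7 := by
      rw [div_le_div_iff₀ (by positivity) (by norm_num)]
      have : (k:ℝ) ≤ (n:ℝ) := by exact_mod_cast hk
      nlinarith
    have h2 : ‖V k‖ ≤ ‖V 0‖ + ‖V k - V 0‖ := by
      have heq : V k = V 0 + (V k - V 0) := by abel
      calc ‖V k‖ = ‖V 0 + (V k - V 0)‖ := by rw [← heq]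
        _ ≤ ‖V 0‖ + ‖V k - V 0‖ := norm_add_le _ _
    have h3 : ‖V k - V 0‖ ≤ (1/7) * ‖V 0‖ := by
      refine h1.trans ?_
      exact mul_le_mul_of_nonneg_right hk7 (norm_nonneg _)
    linarith
  have htel1 := sarah_telescope η W V hWrec
  have hwcur' : wcur = W 0 - η • ∑ j ∈ range (n+1), V j := by
    rw [hwcur, htel1 n le_rfl, sum_range_succ, smul_add]
    abel
  -- distance of inner iterates to wcur
  have hWgap : ∀ k, k < n → ‖wcur - W (k+1)‖ ≤ η * (((n:ℝ) - (k:ℝ)) * ((8/7) * ‖V 0‖)) := by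
    intro k hk
    have hsub : wcur - W (k+1) = -(η • ∑ j ∈ Finset.Ico (k+1) (n+1), V j) := by
      rw [hwcur', htel1 (k+1) hk, Finset.sum_Ico_eq_sub _ (by omega : k+1 ≤ n+1), smul_sub]
      abel
    rw [hsub, norm_neg, norm_smul, Real.norm_eq_abs, abs_of_pos hη0]
    apply mul_le_mul_of_nonneg_left _ hη0.le
    have hcard : ((Finset.Ico (k+1) (n+1)).card : ℝ) = (n:ℝ) - (k:ℝ) := by
      rw [Nat.card_Ico]
      have : n + 1 - (k + 1) = n - k := by omega
      rw [this, Nat.cast_sub (le_of_lt hk)]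
    calc ‖∑ j ∈ Finset.Ico (k+1) (n+1), V j‖
        ≤ ∑ j ∈ Finset.Ico (k+1) (n+1), ‖V j‖ := norm_sum_le _ _
      _ ≤ (Finset.Ico (k+1) (n+1)).card • ((8/7) * ‖V 0‖) := by
          apply Finset.sum_le_card_nsmul
          intro j hj
          exact hVk j (by simp [Finset.mem_Ico] at hj; omega)
      _ = ((n:ℝ) - (k:ℝ)) * ((8/7) * ‖V 0‖) := by
          rw [nsmul_eq_mul, hcard]
  -- error between vcur and gradient P wcur
  set q : EuclideanSpace ℝ (Fin d) := gradient P wcur with hqdef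
  have hsum_fin : ∑ i : Fin n, ((n:ℝ) - (i:ℕ)) = (n:ℝ) * ((n:ℝ) + 1) / 2 := by
    rw [Fin.sum_univ_eq_sum_range (fun j => (n:ℝ) - (j:ℕ))]
    rw [Finset.sum_sub_distrib, Finset.sum_const, Finset.card_range, sum_range_cast_real,
      nsmul_eq_mul]
    ring
  have he : ‖vcur - q‖ ≤ (1/7) * ‖V 0‖ := by
    have hq : q = (1 / (n : ℝ)) • ∑ i : Fin n, gradient (f (π i)) wcur := by
      rw [hqdef, hgradP wcur]
      congr 1
      exact (Equiv.sum_comp π (fun i => gradient (f i) wcur)).symm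
    have hvq : vcur - q = (1 / (n : ℝ)) •
        ∑ i : Fin n, (gradient (f (π i)) (W ((i:ℕ)+1)) - gradient (f (π i)) wcur) := by
      rw [hvcur, hq, ← smul_sub, ← Finset.sum_sub_distrib]
    rw [hvq, norm_smul, Real.norm_eq_abs, abs_of_pos (by positivity : (0:ℝ) < 1/(n:ℝ))]
    have hbound : ‖∑ i : Fin n, (gradient (f (π i)) (W ((i:ℕ)+1)) - gradient (f (π i)) wcur)‖
        ≤ ∑ i : Fin n, (L * η * ((8/7) * ‖V 0‖)) * ((n:ℝ) - (i:ℕ)) := by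
      refine (norm_sum_le _ _).trans (Finset.sum_le_sum ?_)
      intro i _
      have h1 := hLip (π i) (W ((i:ℕ)+1)) wcur
      have h2 : ‖W ((i:ℕ)+1) - wcur‖ ≤ η * (((n:ℝ) - (i:ℕ)) * ((8/7) * ‖V 0‖)) := by
        rw [norm_sub_rev]
        exact hWgap i i.isLt
      calc ‖gradient (f (π i)) (W ((i:ℕ)+1)) - gradient (f (π i)) wcur‖
          ≤ L * ‖W ((i:ℕ)+1) - wcur‖ := h1
        _ ≤ L * (η * (((n:ℝ) - (i:ℕ)) * ((8/7) * ‖V 0‖))) :=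
            mul_le_mul_of_nonneg_left h2 hL.le
        _ = (L * η * ((8/7) * ‖V 0‖)) * ((n:ℝ) - (i:ℕ)) := by ring
    have hsum2 : ∑ i : Fin n, (L * η * ((8/7) * ‖V 0‖)) * ((n:ℝ) - (i:ℕ))
        = (L * η * ((8/7) * ‖V 0‖)) * ((n:ℝ) * ((n:ℝ) + 1) / 2) := by
      rw [← Finset.mul_sum, hsum_fin]
    rw [hsum2] at hbound
    have hfinal : (1/(n:ℝ)) * ((L * η * ((8/7) * ‖V 0‖)) * ((n:ℝ) * ((n:ℝ) + 1) / 2))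
        ≤ (1/7) * ‖V 0‖ := by
      have hV0n : (0:ℝ) ≤ ‖V 0‖ := norm_nonneg _
      have hLη : L * η ≤ 1 / (8 * (n:ℝ)) := by linarith [hηL, mul_comm η L]
      have hkey : (1/(n:ℝ)) * ((L * η * ((8/7) * ‖V 0‖)) * ((n:ℝ) * ((n:ℝ) + 1) / 2))
          = (L * η) * (((n:ℝ) + 1) * ((4/7) * ‖V 0‖)) := by
        field_simp
        ring
      rw [hkey]
      have h1 : (L * η) * (((n:ℝ) + 1) * ((4/7) * ‖V 0‖))
          ≤ (1 / (8 * (n:ℝ))) * (((n:ℝ) + 1) * ((4/7) * ‖V 0‖)) := by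
        apply mul_le_mul_of_nonneg_right hLη
        positivity
      have h2 : (1 / (8 * (n:ℝ))) * (((n:ℝ) + 1) * ((4/7) * ‖V 0‖)) ≤ (1/7) * ‖V 0‖ := by
        rw [div_mul_eq_mul_div, one_mul, div_le_iff₀ (by positivity)]
        nlinarith
      linarith
    calc (1/(n:ℝ)) * ‖∑ i : Fin n, (gradient (f (π i)) (W ((i:ℕ)+1)) - gradient (f (π i)) wcur)‖
        ≤ (1/(n:ℝ)) * ((L * η * ((8/7) * ‖V 0‖)) * ((n:ℝ) * ((n:ℝ) + 1) / 2)) := by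
          apply mul_le_mul_of_nonneg_left hbound (by positivity)
      _ ≤ (1/7) * ‖V 0‖ := hfinal
  -- second epoch
  have hdrift2 := sarah_drift hn η L hη0 hL hηL (fun i => gradient (f (π' i)))
    (fun i a b => hLip (π' i) a b) W' V' hW'rec hV'rec
  have htel2 := sarah_telescope η W' V' hW'rec
  have hwnext' : wnext = wcur - η • ∑ j ∈ range (n+1), V' j := by
    rw [hwnext, htel2 n le_rfl, sum_range_succ, smul_add, hW'0]
    abel
  set h : ℝ := η * ((n:ℝ) + 1) with hhdef
  have hh0 : 0 < h := by positivity
  set r : EuclideanSpace ℝ (Fin d) := η • ∑ j ∈ range (n+1), (V' j - vcur) with hrdef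
  have hd_eq : wnext - wcur = -(h • vcur) - r := by
    have hsplit : ∑ j ∈ range (n+1), V' j
        = (∑ j ∈ range (n+1), (V' j - vcur)) + ((n:ℝ) + 1) • vcur := by
      rw [Finset.sum_sub_distrib, Finset.sum_const, Finset.card_range]
      have hcast : ((n:ℝ) + 1) • vcur = (n+1 : ℕ) • vcur := by
        rw [← Nat.cast_smul_eq_nsmul ℝ (n+1) vcur]
        push_cast
        ring_nf
      rw [hcast]
      abel
    rw [hwnext', hsplit, smul_add, hrdef, hhdef]
    rw [smul_smul]
    abel
  have hrb : ‖r‖ ≤ h / 14 * ‖vcur‖ := by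
    rw [hrdef, norm_smul, Real.norm_eq_abs, abs_of_pos hη0]
    have h1 : ‖∑ j ∈ range (n+1), (V' j - vcur)‖
        ≤ ∑ j ∈ range (n+1), (1 / (7 * (n:ℝ)) * ‖vcur‖) * (j:ℕ) := by
      refine (norm_sum_le _ _).trans (Finset.sum_le_sum ?_)
      intro j hj
      have hjn : j ≤ n := by simp [Finset.mem_range] at hj; omega
      have := hdrift2 j hjn
      rw [hV'0] at this
      calc ‖V' j - vcur‖ ≤ (j:ℝ) / (7 * (n:ℝ)) * ‖vcur‖ := this
        _ = (1 / (7 * (n:ℝ)) * ‖vcur‖) * (j:ℕ) := by ring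
    have h2 : ∑ j ∈ range (n+1), (1 / (7 * (n:ℝ)) * ‖vcur‖) * ((j:ℕ):ℝ)
        = (1 / (7 * (n:ℝ)) * ‖vcur‖) * (((n:ℝ)+1) * (n:ℝ) / 2) := by
      rw [← Finset.mul_sum, sum_range_cast_real]
      push_cast
      ring
    rw [h2] at h1
    have h3 : (1 / (7 * (n:ℝ)) * ‖vcur‖) * (((n:ℝ)+1) * (n:ℝ) / 2)
        = ((n:ℝ)+1) / 14 * ‖vcur‖ := by
      field_simp
      ring
    rw [h3] at h1
    calc η * ‖∑ j ∈ range (n+1), (V' j - vcur)‖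
        ≤ η * (((n:ℝ)+1) / 14 * ‖vcur‖) := mul_le_mul_of_nonneg_left h1 hη0.le
      _ = h / 14 * ‖vcur‖ := by rw [hhdef]; ring
  have hdn : ‖wnext - wcur‖ ≤ (15/14) * h * ‖vcur‖ := by
    rw [hd_eq]
    calc ‖-(h • vcur) - r‖ ≤ ‖-(h • vcur)‖ + ‖r‖ := norm_sub_le _ _
      _ = h * ‖vcur‖ + ‖r‖ := by
          rw [norm_neg, norm_smul, Real.norm_eq_abs, abs_of_pos hh0]
      _ ≤ h * ‖vcur‖ + h / 14 * ‖vcur‖ := by linarith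
      _ = (15/14) * h * ‖vcur‖ := by ring
  -- inner product bounds
  set N : ℝ := ‖q‖
  set G : ℝ := ‖vcur‖
  set e : ℝ := ‖vcur - q‖
  set S : ℝ := ⟪q, vcur⟫ with hSdef
  set R : ℝ := ⟪q, r⟫ with hRdef
  have hS1 : N ^ 2 - N * e ≤ S := by
    have h1 : S = ⟪q, q⟫ - ⟪q, q - vcur⟫ := by
      rw [hSdef, inner_sub_right]
      ring
    have h2 : ⟪q, q⟫ = N ^ 2 := real_inner_self_eq_norm_sq q
    have h3 : ⟪q, q - vcur⟫ ≤ N * ‖q - vcur‖ := real_inner_le_norm _ _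
    have h4 : ‖q - vcur‖ = e := norm_sub_rev q vcur
    rw [h1, h2]
    rw [h4] at h3
    linarith
  have hS2 : G ^ 2 - e * G ≤ S := by
    have h1 : S = ⟪vcur, vcur⟫ - ⟪vcur - q, vcur⟫ := by
      rw [hSdef, inner_sub_left, real_inner_comm]
      ring
    have h2 : ⟪vcur, vcur⟫ = G ^ 2 := real_inner_self_eq_norm_sq vcur
    have h3 : ⟪vcur - q, vcur⟫ ≤ e * G := real_inner_le_norm _ _
    rw [h1, h2]
    linarith
  have hN0 : (0:ℝ) ≤ N := norm_nonneg _
  have hRb : -R ≤ N * (h / 14 * G) := by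
    have h1 : -R = ⟪q, -r⟫ := by rw [hRdef, inner_neg_right]
    have h2 : ⟪q, -r⟫ ≤ N * ‖-r‖ := real_inner_le_norm _ _
    rw [norm_neg] at h2
    have h3 : N * ‖r‖ ≤ N * (h / 14 * G) := mul_le_mul_of_nonneg_left hrb hN0
    linarith [h1 ▸ h2]
  have hNle : N ≤ G + e := by
    have : q = vcur - (vcur - q) := by abel
    calc N = ‖vcur - (vcur - q)‖ := by rw [← this]
      _ ≤ ‖vcur‖ + ‖vcur - q‖ := norm_sub_le _ _
  -- descent
  have hdesc0 := descent_lemma P L hL hPdiff hLipP wcur wnext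
  have hinner : ⟪q, wnext - wcur⟫ = -(h * S) - R := by
    rw [hd_eq, inner_sub_right, inner_neg_right, real_inner_smul_right, hSdef, hRdef]
  rw [hinner] at hdesc0
  have hdesc : P wnext - Pstar ≤ (P wcur - Pstar) - h * S - R + L * ‖wnext - wcur‖ ^ 2 := by
    linarith
  -- PL
  have hPL : 2 * μ * ((P wcur - Pstar)) ≤ N ^ 2 := by
    have := pl_ineq P μ hμ hsc hPdiff wstar wcur
    rw [hPstar]
    exact this
  -- step size products
  have hLh : L * h ≤ 1/4 := by
    rw [hhdef]
    have h1 : L * (η * ((n:ℝ)+1)) = (η * L) * ((n:ℝ)+1) := by ring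
    rw [h1]
    have h2 : (η * L) * ((n:ℝ)+1) ≤ (1 / (8 * (n:ℝ))) * ((n:ℝ)+1) := by
      apply mul_le_mul_of_nonneg_right hηL (by linarith)
    have h3 : (1 / (8 * (n:ℝ))) * ((n:ℝ)+1) ≤ 1/4 := by
      rw [div_mul_eq_mul_div, one_mul, div_le_iff₀ (by positivity)]
      nlinarith
    linarith
  have hμh : μ * h ≤ 1/4 := by
    have : μ * h ≤ L * h := mul_le_mul_of_nonneg_right hμL hh0.le
    linarith
  have hee : e ≤ ‖vprev‖ / 7 := by
    rw [← hV0]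
    linarith [he]
  -- final assembly
  have key := key_algebra h μ N G e (‖vprev‖) S R (‖wnext - wcur‖) L
    (P wcur - Pstar) (P wnext - Pstar) hh0.le hμ hL hdesc (norm_nonneg _) hdn
    hS1 hS2 hRb hNle (norm_nonneg _) (norm_nonneg _) (norm_nonneg _) hN0
    hPL hLh hμh hee
  calc P wnext - Pstar + (η * ((n : ℝ) + 1) / 16) * ‖vcur‖ ^ 2
      = (P wnext - Pstar) + h / 16 * G ^ 2 := by first
        | (rw [hhdef]; ring)
        | rw [hhdef]
        | ring
    _ ≤ (1 - h * μ / 2) * ((P wcur - Pstar) + h / 16 * ‖vprev‖ ^ 2) := key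
    _ = (1 - η * μ * ((n : ℝ) + 1) / 2)
        * (P wcur - Pstar + (η * ((n : ℝ) + 1) / 16) * ‖vprev‖ ^ 2) := by
        first
        | (rw [hhdef]; ring)
        | rw [hhdef]
        | ring
end

section
/- (Corollary 1, geometric decay form.) Assume each f_i is convex, P is μ-strongly convex with minimizer w* and optimal value P*, the δ-similarity condition holds, and 0 < η ≤ min(1/(8nL), 1/(8n²δ)). Define the Shuffled-SARAH trajectory: given w_0, v_0 ∈ ℝ^d and permutations π_s of {1,…,n} for each s ≥ 0, run for each s a SARAH epoch with step size η, permutation π_s, start point w_s and initial direction v_s, producing inner iterates w¹_s,…,wⁿ_s and output w_{s+1}, and set v_{s+1} = (1/n)·Σ_{i=1}^{n} ∇f_{π_s(i)}(wⁱ_s). Then for every S ≥ 1: P(w_S) − P* + (η(n+1)/16)·‖v_{S−1}‖² ≤ (1 − η·μ·(n+1)/2)^{S−1} · (P(w_1) − P* + (η(n+1)/16)·‖v_0‖²). -/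
open scoped BigOperators RealInnerProductSpace
open Set

section AuxSarah
variable {F : Type*} [NormedAddCommGroup F] [InnerProductSpace ℝ F] [CompleteSpace F]

private lemma sarah_hasDerivAt_line (x v : F) (t : ℝ) :
    HasDerivAt (fun t : ℝ => x + t • v) v t := by
  simpa using ((hasDerivAt_id t).smul_const v).const_add x

private lemma sarah_hasDerivAt_comp_line {g : F → ℝ} (hg : Differentiable ℝ g) (x v : F)
    (t : ℝ) : HasDerivAt (fun t : ℝ => g (x + t • v)) ⟪gradient g (x + t • v), v⟫ t := by
  have h1 : HasFDerivAt g (InnerProductSpace.toDual ℝ F (gradient g (x + t • v))) (x + t • v) :=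
    (hg _).hasGradientAt.hasFDerivAt
  have h2 := h1.comp_hasDerivAt t (sarah_hasDerivAt_line x v t)
  rw [InnerProductSpace.toDual_apply_apply] at h2
  exact h2

private lemma sarah_convex_grad_lb {g : F → ℝ} (hg : Differentiable ℝ g)
    (hc : ConvexOn ℝ Set.univ g) (x y : F) :
    g x + ⟪gradient g x, y - x⟫ ≤ g y := by
  set φ : ℝ → ℝ := fun t => g (x + t • (y - x)) with hφ
  have hφc : ConvexOn ℝ Set.univ φ := by
    have := hc.comp_affineMap (AffineMap.lineMap x y : ℝ →ᵃ[ℝ] F)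
    have he : φ = g ∘ (AffineMap.lineMap x y : ℝ →ᵃ[ℝ] F) := by
      funext t
      simp [φ, AffineMap.lineMap_apply, add_comm, vsub_eq_sub]
    rw [he]
    simpa using this
  have hd0 : HasDerivAt φ ⟪gradient g x, y - x⟫ 0 := by
    have := sarah_hasDerivAt_comp_line hg x (y - x) 0
    simpa using this
  have hslope := hφc.le_slope_of_hasDerivAt (mem_univ (0:ℝ)) (mem_univ (1:ℝ)) one_pos hd0
  have h1 : φ 1 = g y := by simp [φ]
  have h0 : φ 0 = g x := by simp [φ]
  rw [slope_def_field] at hslope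
  simp only [h0, h1, sub_zero, div_one] at hslope
  linarith

private lemma sarah_smooth_ub {g : F → ℝ} (hg : Differentiable ℝ g) {K : ℝ}
    (hK : ∀ a b, ‖gradient g a - gradient g b‖ ≤ K * ‖a - b‖) (x y : F) :
    g y ≤ g x + ⟪gradient g x, y - x⟫ + K / 2 * ‖y - x‖ ^ 2 := by
  set v := y - x with hv
  set ψ : ℝ → ℝ := fun t =>
    g (x + t • v) - t * ⟪gradient g x, v⟫ - K / 2 * t ^ 2 * ‖v‖ ^ 2 with hψ
  have hder : ∀ t : ℝ, HasDerivAt ψ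
      (⟪gradient g (x + t • v), v⟫ - ⟪gradient g x, v⟫ - K / 2 * (2 * t) * ‖v‖ ^ 2) t := by
    intro t
    have h1 := sarah_hasDerivAt_comp_line hg x v t
    have h2 : HasDerivAt (fun t : ℝ => t * ⟪gradient g x, v⟫) ⟪gradient g x, v⟫ t :=
      hasDerivAt_mul_const _
    have h3 : HasDerivAt (fun t : ℝ => K / 2 * t ^ 2 * ‖v‖ ^ 2)
        (K / 2 * (2 * t) * ‖v‖ ^ 2) t := by
      have := ((hasDerivAt_pow 2 t).const_mul (K / 2)).mul_const (‖v‖ ^ 2)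
      simpa [mul_comm, mul_assoc, mul_left_comm] using this
    exact (h1.sub h2).sub h3
  have hmono : AntitoneOn ψ (Icc (0:ℝ) 1) := by
    apply antitoneOn_of_deriv_nonpos (convex_Icc 0 1)
    · exact (Differentiable.continuous (fun t => (hder t).differentiableAt)).continuousOn
    · exact fun t _ => (hder t).differentiableAt.differentiableWithinAt
    · intro t ht
      rw [interior_Icc] at ht
      rw [(hder t).deriv]
      have hb : ⟪gradient g (x + t • v) - gradient g x, v⟫ ≤ K * t * ‖v‖ ^ 2 := by
        calc ⟪gradient g (x + t • v) - gradient g x, v⟫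
            ≤ ‖gradient g (x + t • v) - gradient g x‖ * ‖v‖ := real_inner_le_norm _ _
          _ ≤ K * ‖(x + t • v) - x‖ * ‖v‖ := by
              have := hK (x + t • v) x
              have hv0 : (0:ℝ) ≤ ‖v‖ := norm_nonneg _
              nlinarith [norm_nonneg (gradient g (x + t • v) - gradient g x)]
          _ = K * t * ‖v‖ ^ 2 := by
              rw [add_sub_cancel_left, norm_smul, Real.norm_eq_abs,
                abs_of_pos ht.1]
              ring
      rw [inner_sub_left] at hb
      linarith
  have := hmono (left_mem_Icc.2 zero_le_one) (right_mem_Icc.2 zero_le_one) zero_le_one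
  simp only [ψ] at this
  simp only [zero_smul, add_zero, one_smul, zero_mul, one_mul, zero_pow, one_pow] at this
  have hxy : x + v = y := by rw [hv]; abel
  rw [hxy] at this
  linarith

private lemma sarah_strong_grad_lb {P : F → ℝ} {μ : ℝ} (hP : Differentiable ℝ P)
    (hsc : StrongConvexOn Set.univ μ P) (x y : F) :
    P x + ⟪gradient P x, y - x⟫ + μ / 2 * ‖y - x‖ ^ 2 ≤ P y := by
  set q : F → ℝ := fun z => P z - μ / 2 * ‖z‖ ^ 2 with hq
  have hqc : ConvexOn ℝ Set.univ q := strongConvexOn_iff_convex.mp hsc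
  have hsq : ∀ z : F, HasGradientAt (fun z : F => μ / 2 * ‖z‖ ^ 2) ((μ / 2 * 2) • z) z := by
    intro z
    have h1 : HasFDerivAt (fun z : F => ‖z‖ ^ 2) (2 • (innerSL ℝ z)) z :=
      (hasStrictFDerivAt_norm_sq z).hasFDerivAt
    have h2 := h1.const_mul (μ / 2)
    rw [hasGradientAt_iff_hasFDerivAt]
    refine h2.congr_fderiv ?_
    ext w
    simp [InnerProductSpace.toDual_apply_apply, inner_smul_left, real_inner_comm]
    ring
  have hqd : Differentiable ℝ q :=
    hP.sub fun z => ((hsq z).differentiableAt)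
  have hqg : ∀ z, gradient q z = gradient P z - (μ / 2 * 2) • z := by
    intro z
    have : HasGradientAt q (gradient P z - (μ / 2 * 2) • z) z := by
      rw [hasGradientAt_iff_hasFDerivAt]
      have := ((hP z).hasGradientAt.hasFDerivAt).sub ((hsq z).hasFDerivAt)
      refine this.congr_fderiv ?_
      simp [map_sub]
    exact this.gradient
  have := sarah_convex_grad_lb hqd hqc x y
  rw [hqg x] at this
  simp only [q] at this
  rw [inner_sub_left] at this
  have hinner : ⟪(μ / 2 * 2) • x, y - x⟫ = μ * ⟪x, y - x⟫ := by
    rw [real_inner_smul_left]; ring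
  rw [hinner] at this
  have hn : ‖y - x‖ ^ 2 = ‖y‖ ^ 2 - 2 * ⟪y, x⟫ + ‖x‖ ^ 2 := norm_sub_sq_real y x
  rw [inner_sub_right] at this
  have hc : ⟪x, y⟫ = ⟪y, x⟫ := real_inner_comm y x
  have hxx : ⟪x, x⟫ = ‖x‖ ^ 2 := real_inner_self_eq_norm_sq x
  have hg2 : ⟪gradient P x, y - x⟫ = ⟪gradient P x, y⟫ - ⟪gradient P x, x⟫ :=
    inner_sub_right _ _ _
  have hx2 : ⟪x, y - x⟫ = ⟪x, y⟫ - ⟪x, x⟫ := inner_sub_right _ _ _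
  rw [hx2, hxx, hc] at this
  rw [hg2, hn]
  linarith

end AuxSarah

private lemma sarah_A7 {η L n : ℝ} (hη : 0 < η) (hL : 0 < L) (hn : 1 ≤ n)
    (hA : η * n * L ≤ 1/8) : η * (n + 1) * L ≤ 1/4 := by
  nlinarith [mul_nonneg hη.le hL.le]

private lemma sarah_A1 {Vn Vi vs i n η L : ℝ} (hη : 0 < η) (hL : 0 < L)
    (hi0 : 0 ≤ i) (hin : i ≤ n) (hA : η * n * L ≤ 1/8)
    (h1 : Vn ≤ Vi + L * (η * Vi)) (h2 : Vi ≤ (1 + 2*i*η*L) * vs)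
    (hVi : 0 ≤ Vi) (hvs : 0 ≤ vs) :
    Vn ≤ (1 + 2*(i+1)*η*L) * vs := by
  have h2i : 2*i*η*L ≤ 1/4 := by
    nlinarith [mul_nonneg (mul_nonneg (sub_nonneg.2 hin) hη.le) hL.le]
  have hmul := mul_le_mul_of_nonneg_left h2 (by positivity : (0:ℝ) ≤ 1 + η*L)
  have hkey : 0 ≤ η*L*(1 - 2*i*η*L) * vs :=
    mul_nonneg (mul_nonneg (mul_nonneg hη.le hL.le) (by linarith)) hvs
  nlinarith [hmul, hkey]

private lemma sarah_A2 {Vi vs i n η L : ℝ} (hη : 0 < η) (hL : 0 < L)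
    (hi0 : 0 ≤ i) (hin : i ≤ n) (hA : η * n * L ≤ 1/8)
    (h2 : Vi ≤ (1 + 2*i*η*L) * vs) (hvs : 0 ≤ vs) :
    Vi ≤ (5/4) * vs := by
  have h2i : 2*i*η*L ≤ 1/4 := by
    nlinarith [mul_nonneg (mul_nonneg (sub_nonneg.2 hin) hη.le) hL.le]
  nlinarith [mul_nonneg (by linarith : (0:ℝ) ≤ 1/4 - 2*i*η*L) hvs]

private lemma sarah_A3 {X vs i n η L : ℝ} (hη : 0 < η) (hL : 0 < L)
    (hin : i ≤ n) (hA : η * n * L ≤ 1/8)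
    (h : X ≤ i * (η * L * ((5/4) * vs))) (hvs : 0 ≤ vs) :
    X ≤ (5/32) * vs := by
  have h1 : i*(η*L*((5/4)*vs)) ≤ n*(η*L*((5/4)*vs)) :=
    mul_le_mul_of_nonneg_right hin (by positivity)
  nlinarith [mul_nonneg (by linarith : (0:ℝ) ≤ 1/8 - η*n*L) hvs]

private lemma sarah_A5 {X c vs : ℝ} (h : X ≤ (5/4) * c * vs) (hc : c ≤ 1/8)
    (hvs : 0 ≤ vs) : X ≤ (5/32) * vs := by
  nlinarith [mul_nonneg (by linarith : (0:ℝ) ≤ 1/8 - c) hvs]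

private lemma sarah_A9 {Ps Px ip g t μ : ℝ} (hμ : 0 < μ)
    (h1 : Px + ip + μ/2 * t^2 ≤ Ps) (h2 : -(g * t) ≤ ip)
    (hg : 0 ≤ g) (ht : 0 ≤ t) : 2*μ*(Px - Ps) ≤ g^2 := by
  nlinarith [sq_nonneg (g - μ * t)]

set_option maxHeartbeats 1000000 in
private lemma sarah_A6 {τ μ L a gg b u e dgv nd D D' : ℝ}
    (hτ0 : 0 < τ) (hμ : 0 < μ) (hL : 0 < L) (hτL : τ*L ≤ 1/4) (hτμ : τ*μ ≤ 1/4)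
    (ha0 : 0 ≤ a) (hgg0 : 0 ≤ gg) (hb0 : 0 ≤ b) (hu0 : 0 ≤ u)
    (he' : 0 ≤ e) (hdgv0 : 0 ≤ dgv) (hnd0 : 0 ≤ nd) (hD : 0 ≤ D)
    (hd : D' ≤ D - τ * ((a^2 + gg^2 - nd^2)/2) + L/2 * (τ^2 * gg^2))
    (h3 : nd ≤ e + dgv) (h4 : b ≤ gg + dgv)
    (hdgb : dgv ≤ (5/32)*b) (heu : e ≤ (5/32)*u)
    (hPL : 2*μ*D ≤ a^2) :
    D' + (τ/16)*b^2 ≤ (1 - τ*μ/2)*(D + (τ/16)*u^2) := by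
  have hsq3 : nd^2 ≤ 2*e^2 + 2*dgv^2 := by nlinarith [sq_nonneg (e - dgv)]
  have hgg2 : (729/1024) * b^2 ≤ gg^2 := by nlinarith
  have hL2 : L/2 * (τ^2 * gg^2) ≤ (τ/8) * gg^2 := by
    nlinarith [mul_nonneg (mul_nonneg hτ0.le hτ0.le) (sq_nonneg gg)]
  have hd' : D' ≤ D - (τ/2)*a^2 - (3*τ/8)*gg^2 + τ*(e^2 + dgv^2) := by
    have hx := mul_nonneg hτ0.le
      (by linarith : (0:ℝ) ≤ 2*e^2 + 2*dgv^2 - nd^2)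
    nlinarith [hd, hL2, hx]
  have he2 : e^2 ≤ (25/1024) * u^2 := by nlinarith
  have hdg2 : dgv^2 ≤ (25/1024) * b^2 := by nlinarith
  have hpl2 : τ*μ*D ≤ (τ/2)*a^2 := by
    nlinarith [mul_le_mul_of_nonneg_left hPL hτ0.le]
  have h6 : D' ≤ D - τ*μ*D - (2187/8192)*τ*b^2 + (25/1024)*τ*u^2 + (25/1024)*τ*b^2 := by
    have k1 := mul_le_mul_of_nonneg_left hgg2 (by linarith : (0:ℝ) ≤ 3*τ/8)
    have k2 := mul_le_mul_of_nonneg_left he2 hτ0.le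
    have k3 := mul_le_mul_of_nonneg_left hdg2 hτ0.le
    nlinarith [hd', hpl2, k1, k2, k3]
  have hu2 : (25/1024)*τ*u^2 ≤ (1 - τ*μ/2) * ((τ/16) * u^2) := by
    nlinarith [mul_nonneg hτ0.le (sq_nonneg u)]
  have hb2 : - (2187/8192)*τ*b^2 + (25/1024)*τ*b^2 + (τ/16)*b^2 ≤ 0 := by
    nlinarith [mul_nonneg hτ0.le (sq_nonneg b)]
  have hDd : - τ*μ*D ≤ - (τ*μ/2)*D := by
    nlinarith [mul_nonneg (mul_nonneg hτ0.le hμ.le) hD]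
  nlinarith [h6, hu2, hb2, hDd]


set_option maxHeartbeats 2000000 in
/-- Corollary 1, geometric decay form, for Shuffled-SARAH. -/
theorem shuffled_sarah_geometric_decay
    {d n : ℕ} (hd : 1 ≤ d) (hn : 1 ≤ n)
    (f : Fin n → EuclideanSpace ℝ (Fin d) → ℝ)
    (P : EuclideanSpace ℝ (Fin d) → ℝ)
    (hP : ∀ w, P w = (1 / (n : ℝ)) * ∑ i, f i w)
    (L μ δ η : ℝ) (hL : 0 < L) (hμ : 0 < μ) (hδ : 0 < δ)
    (hdiff : ∀ i, Differentiable ℝ (f i))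
    (hconv : ∀ i, ConvexOn ℝ Set.univ (f i))
    (hLip : ∀ i w₁ w₂, ‖gradient (f i) w₁ - gradient (f i) w₂‖ ≤ L * ‖w₁ - w₂‖)
    (hsc : StrongConvexOn Set.univ μ P)
    (wstar : EuclideanSpace ℝ (Fin d)) (hmin : IsMinOn P Set.univ wstar)
    (Pstar : ℝ) (hPstar : Pstar = P wstar)
    (hsim : ∀ i w₁ w₂,
      ‖(gradient (f i) w₁ - gradient P w₁) - (gradient (f i) w₂ - gradient P w₂)‖
        ≤ (δ / 2) * ‖w₁ - w₂‖)
    (hη0 : 0 < η)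
    (hη : η ≤ min (1 / (8 * n * L)) (1 / (8 * n ^ 2 * δ)))
    -- the Shuffled-SARAH trajectory
    (π : ℕ → Equiv.Perm (Fin n))
    (w v : ℕ → EuclideanSpace ℝ (Fin d))
    (W V : ℕ → ℕ → EuclideanSpace ℝ (Fin d))
    (hW0 : ∀ s, W s 0 = w s) (hV0 : ∀ s, V s 0 = v s)
    (hWrec : ∀ s, ∀ i : Fin n, W s ((i : ℕ) + 1) = W s i - η • V s i)
    (hVrec : ∀ s, ∀ i : Fin n, V s ((i : ℕ) + 1)
      = V s i + gradient (f (π s i)) (W s ((i : ℕ) + 1)) - gradient (f (π s i)) (W s i))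
    (hwnext : ∀ s, w (s + 1) = W s n - η • V s n)
    (hvnext : ∀ s, v (s + 1)
      = (1 / (n : ℝ)) • ∑ i : Fin n, gradient (f (π s i)) (W s ((i : ℕ) + 1))) :
    ∀ S : ℕ, 1 ≤ S →
      P (w S) - Pstar + (η * ((n : ℝ) + 1) / 16) * ‖v (S - 1)‖ ^ 2
        ≤ (1 - η * μ * ((n : ℝ) + 1) / 2) ^ (S - 1)
          * (P (w 1) - Pstar + (η * ((n : ℝ) + 1) / 16) * ‖v 0‖ ^ 2) := by
  have hn' : (0:ℝ) < n := by exact_mod_cast hn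
  have hn1 : (1:ℝ) ≤ n := by exact_mod_cast hn
  -- stepsize bound
  have hA : η * n * L ≤ 1/8 := by
    have h1 : η ≤ 1 / (8 * n * L) := (le_min_iff.mp hη).1
    have h2 : (0:ℝ) < 8 * n * L := by positivity
    have h3 := (le_div_iff₀ h2).mp h1
    nlinarith [h3]
  -- gradient of P
  have hgradP : ∀ x, HasGradientAt P ((n:ℝ)⁻¹ • ∑ i, gradient (f i) x) x := by
    intro x
    rw [hasGradientAt_iff_hasFDerivAt]
    have h1 : HasFDerivAt (fun w => ∑ i, f i w)
        (∑ i, InnerProductSpace.toDual ℝ _ (gradient (f i) x)) x :=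
      HasFDerivAt.fun_sum fun i _ => ((hdiff i) x).hasGradientAt.hasFDerivAt
    have h2 := h1.const_mul (1/(n:ℝ))
    have h3 : HasFDerivAt P
        ((1/(n:ℝ)) • ∑ i, InnerProductSpace.toDual ℝ _ (gradient (f i) x)) x := by
      have he : P = fun w => (1/(n:ℝ)) * ∑ i, f i w := funext hP
      rw [he]; exact h2
    refine h3.congr_fderiv ?_
    simp [map_sum, one_div, map_smul]
  have hgP : ∀ x, gradient P x = (n:ℝ)⁻¹ • ∑ i, gradient (f i) x :=
    fun x => (hgradP x).gradient
  have hPdiff : Differentiable ℝ P := fun x => (hgradP x).differentiableAt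
  have hLipP : ∀ a b, ‖gradient P a - gradient P b‖ ≤ L * ‖a - b‖ := by
    intro a b
    rw [hgP a, hgP b, ← smul_sub, ← Finset.sum_sub_distrib, norm_smul]
    have h1 : ‖∑ i, (gradient (f i) a - gradient (f i) b)‖
        ≤ ∑ _i : Fin n, (L * ‖a - b‖) :=
      (norm_sum_le _ _).trans (Finset.sum_le_sum fun i _ => hLip i a b)
    rw [Finset.sum_const, Finset.card_univ, Fintype.card_fin, nsmul_eq_mul] at h1
    have h2 : ‖((n:ℝ)⁻¹)‖ = (n:ℝ)⁻¹ := by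
      rw [Real.norm_eq_abs, abs_of_pos (by positivity)]
    rw [h2]
    calc (n:ℝ)⁻¹ * ‖∑ i, (gradient (f i) a - gradient (f i) b)‖
        ≤ (n:ℝ)⁻¹ * ((n:ℝ) * (L * ‖a - b‖)) := by
          apply mul_le_mul_of_nonneg_left h1 (by positivity)
      _ = L * ‖a - b‖ := by field_simp
  have hub : ∀ x y, P y ≤ P x + ⟪gradient P x, y - x⟫ + L/2 * ‖y - x‖^2 :=
    sarah_smooth_ub hPdiff hLipP
  have hlb : ∀ x y, P x + ⟪gradient P x, y - x⟫ + μ/2 * ‖y - x‖^2 ≤ P y :=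
    sarah_strong_grad_lb hPdiff hsc
  have hμL : μ ≤ L := by
    have hdd : (0:ℕ) < d := hd
    set y0 : EuclideanSpace ℝ (Fin d) := EuclideanSpace.single ⟨0, hdd⟩ (1:ℝ) with hy0
    have hny : ‖y0 - 0‖ = 1 := by
      rw [sub_zero, hy0, EuclideanSpace.norm_single]; norm_num
    have h1 := hub 0 y0
    have h2 := hlb 0 y0
    rw [hny] at h1 h2
    norm_num at h1 h2
    linarith
  have hDpos : ∀ x, 0 ≤ P x - Pstar := by
    intro x
    have := hmin (mem_univ x)
    rw [hPstar]
    simpa using this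
  have hPL : ∀ x, 2*μ*(P x - Pstar) ≤ ‖gradient P x‖^2 := by
    intro x
    have h1 := hlb x wstar
    have h2 : |⟪gradient P x, wstar - x⟫| ≤ ‖gradient P x‖ * ‖wstar - x‖ :=
      abs_real_inner_le_norm _ _
    have h3 : -(‖gradient P x‖ * ‖wstar - x‖) ≤ ⟪gradient P x, wstar - x⟫ :=
      neg_le_of_abs_le h2
    rw [← hPstar] at h1
    exact sarah_A9 hμ h1 h3 (norm_nonneg _) (norm_nonneg _)
  -- epoch lemmas
  have hdW : ∀ s : ℕ, ∀ i : ℕ, i < n → ‖W s (i+1) - W s i‖ = η * ‖V s i‖ := by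
    intro s i hi
    have h := hWrec s ⟨i, hi⟩
    simp only [Fin.val_mk] at h
    rw [h]
    have : W s i - η • V s i - W s i = -(η • V s i) := by abel
    rw [this, norm_neg, norm_smul, Real.norm_eq_abs, abs_of_pos hη0]
  have hEV : ∀ s : ℕ, ∀ i : ℕ, i ≤ n → ‖V s i‖ ≤ (1 + 2*i*η*L) * ‖v s‖ := by
    intro s i
    induction i with
    | zero => intro _; rw [hV0]; simp
    | succ i ih =>
      intro hi1
      have hi : i < n := hi1
      have ihh := ih (le_of_lt hi)
      have h := hVrec s ⟨i, hi⟩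
      simp only [Fin.val_mk] at h
      have hnorm : ‖V s (i+1)‖ ≤ ‖V s i‖ + L * (η * ‖V s i‖) := by
        rw [h]
        calc ‖V s i + gradient (f (π s ⟨i, hi⟩)) (W s (i+1))
              - gradient (f (π s ⟨i, hi⟩)) (W s i)‖
            ≤ ‖V s i‖ + ‖gradient (f (π s ⟨i, hi⟩)) (W s (i+1))
              - gradient (f (π s ⟨i, hi⟩)) (W s i)‖ := by
              rw [add_sub_assoc]; exact norm_add_le _ _
          _ ≤ ‖V s i‖ + L * ‖W s (i+1) - W s i‖ := by
              have := hLip (π s ⟨i, hi⟩) (W s (i+1)) (W s i)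
              linarith
          _ = ‖V s i‖ + L * (η * ‖V s i‖) := by rw [hdW s i hi]
      have hin : (i:ℝ) ≤ (n:ℝ) := by exact_mod_cast le_of_lt hi
      push_cast
      exact sarah_A1 hη0 hL (by positivity) hin hA hnorm ihh (norm_nonneg _)
        (norm_nonneg _)
  have hEVb : ∀ s : ℕ, ∀ i : ℕ, i ≤ n → ‖V s i‖ ≤ (5/4) * ‖v s‖ := by
    intro s i hi
    have h := hEV s i hi
    have hin : (i:ℝ) ≤ (n:ℝ) := by exact_mod_cast hi
    exact sarah_A2 hη0 hL (by positivity) hin hA h (norm_nonneg _)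
  have hEVd : ∀ s : ℕ, ∀ i : ℕ, i ≤ n → ‖V s i - v s‖ ≤ (5/32) * ‖v s‖ := by
    intro s i
    have key : ∀ i : ℕ, i ≤ n → ‖V s i - v s‖ ≤ (i:ℝ) * (η * L * ((5/4) * ‖v s‖)) := by
      intro i
      induction i with
      | zero => intro _; rw [hV0]; simp
      | succ i ih =>
        intro hi1
        have hi : i < n := hi1
        have ihh := ih (le_of_lt hi)
        have h := hVrec s ⟨i, hi⟩
        simp only [Fin.val_mk] at h
        have hstep : ‖V s (i+1) - V s i‖ ≤ η * L * ((5/4) * ‖v s‖) := by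
          rw [h]
          have heq : V s i + gradient (f (π s ⟨i, hi⟩)) (W s (i+1))
              - gradient (f (π s ⟨i, hi⟩)) (W s i) - V s i
              = gradient (f (π s ⟨i, hi⟩)) (W s (i+1))
                - gradient (f (π s ⟨i, hi⟩)) (W s i) := by abel
          rw [heq]
          calc ‖gradient (f (π s ⟨i, hi⟩)) (W s (i+1))
                - gradient (f (π s ⟨i, hi⟩)) (W s i)‖
              ≤ L * ‖W s (i+1) - W s i‖ := hLip _ _ _
            _ = L * (η * ‖V s i‖) := by rw [hdW s i hi]
            _ ≤ η * L * ((5/4) * ‖v s‖) := by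
                have h1 := hEVb s i (le_of_lt hi)
                have h2 := mul_le_mul_of_nonneg_left h1
                  (mul_nonneg hη0.le hL.le)
                nlinarith [h2]
        calc ‖V s (i+1) - v s‖ ≤ ‖V s (i+1) - V s i‖ + ‖V s i - v s‖ :=
              norm_sub_le_norm_sub_add_norm_sub _ _ _
          _ ≤ (i:ℝ) * (η * L * ((5/4) * ‖v s‖)) + η * L * ((5/4) * ‖v s‖) := by linarith
          _ = ((i:ℕ)+1:ℕ) * (η * L * ((5/4) * ‖v s‖)) := by push_cast; ring
    intro hi
    have h := key i hi
    have hin : (i:ℝ) ≤ (n:ℝ) := by exact_mod_cast hi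
    exact sarah_A3 hη0 hL hin hA h (norm_nonneg _)
  have hEW : ∀ s : ℕ, ∀ i : ℕ, i ≤ n →
      W s i = w s - η • ∑ j ∈ Finset.range i, V s j := by
    intro s i
    induction i with
    | zero => intro _; rw [hW0]; simp
    | succ i ih =>
      intro hi1
      have hi : i < n := hi1
      have h := hWrec s ⟨i, hi⟩
      simp only [Fin.val_mk] at h
      rw [h, ih (le_of_lt hi), Finset.sum_range_succ, smul_add, sub_sub]
  have hGnext : ∀ s : ℕ, w (s+1) = w s - η • ∑ j ∈ Finset.range (n+1), V s j := by
    intro s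
    rw [hwnext s, hEW s n le_rfl, Finset.sum_range_succ, smul_add, sub_sub]
  have hWdist : ∀ s : ℕ, ∀ i : ℕ, i < n →
      ‖W s (i+1) - w (s+1)‖ ≤ η * n * ((5/4) * ‖v s‖) := by
    intro s i hi
    rw [hEW s (i+1) hi, hGnext s]
    have he : (w s - η • ∑ j ∈ Finset.range (i+1), V s j)
        - (w s - η • ∑ j ∈ Finset.range (n+1), V s j)
        = η • (∑ j ∈ Finset.range (n+1), V s j - ∑ j ∈ Finset.range (i+1), V s j) := by
      rw [smul_sub]; abel
    rw [he]
    have hsub : ∑ j ∈ Finset.range (n+1), V s j - ∑ j ∈ Finset.range (i+1), V s j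
        = ∑ j ∈ Finset.Ico (i+1) (n+1), V s j := by
      rw [Finset.sum_Ico_eq_sub _ (by omega : i+1 ≤ n+1)]
    rw [hsub, norm_smul, Real.norm_eq_abs, abs_of_pos hη0]
    have hb : ‖∑ j ∈ Finset.Ico (i+1) (n+1), V s j‖
        ≤ ∑ j ∈ Finset.Ico (i+1) (n+1), ((5/4) * ‖v s‖) := by
      refine (norm_sum_le _ _).trans (Finset.sum_le_sum fun j hj => ?_)
      have hj' : j ≤ n := by
        have := (Finset.mem_Ico.mp hj).2; omega
      exact hEVb s j hj'
    rw [Finset.sum_const, Nat.card_Ico, nsmul_eq_mul] at hb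
    have hcard : ((n + 1 - (i+1) : ℕ) : ℝ) ≤ (n:ℝ) := by
      have : n + 1 - (i+1) ≤ n := by omega
      exact_mod_cast this
    calc η * ‖∑ j ∈ Finset.Ico (i+1) (n+1), V s j‖
        ≤ η * (((n + 1 - (i+1) : ℕ):ℝ) * ((5/4) * ‖v s‖)) := by
          apply mul_le_mul_of_nonneg_left hb hη0.le
      _ ≤ η * n * ((5/4) * ‖v s‖) := by
          rw [mul_assoc]
          exact mul_le_mul_of_nonneg_left (mul_le_mul_of_nonneg_right hcard
            (by positivity : (0:ℝ) ≤ (5/4) * ‖v s‖)) hη0.le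
  -- error of the next direction
  have hE : ∀ s : ℕ, ‖v (s+1) - gradient P (w (s+1))‖ ≤ (5/32) * ‖v s‖ := by
    intro s
    rw [hvnext s, hgP (w (s+1))]
    have hperm : (∑ i : Fin n, gradient (f i) (w (s+1)))
        = ∑ i : Fin n, gradient (f (π s i)) (w (s+1)) :=
      (Equiv.sum_comp (π s) fun j => gradient (f j) (w (s+1))).symm
    have heq : (1/(n:ℝ)) • (∑ i : Fin n, gradient (f (π s i)) (W s ((i:ℕ)+1)))
        - (n:ℝ)⁻¹ • ∑ i, gradient (f i) (w (s+1))
        = (n:ℝ)⁻¹ • ∑ i : Fin n,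
            (gradient (f (π s i)) (W s ((i:ℕ)+1)) - gradient (f (π s i)) (w (s+1))) := by
      rw [one_div, hperm, ← smul_sub, ← Finset.sum_sub_distrib]
    rw [heq, norm_smul]
    have hbd : ‖∑ i : Fin n,
        (gradient (f (π s i)) (W s ((i:ℕ)+1)) - gradient (f (π s i)) (w (s+1)))‖
        ≤ ∑ _i : Fin n, (L * (η * n * ((5/4) * ‖v s‖))) := by
      refine (norm_sum_le _ _).trans (Finset.sum_le_sum fun i _ => ?_)
      calc ‖gradient (f (π s i)) (W s ((i:ℕ)+1)) - gradient (f (π s i)) (w (s+1))‖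
          ≤ L * ‖W s ((i:ℕ)+1) - w (s+1)‖ := hLip _ _ _
        _ ≤ L * (η * n * ((5/4) * ‖v s‖)) :=
            mul_le_mul_of_nonneg_left (hWdist s i i.isLt) hL.le
    rw [Finset.sum_const, Finset.card_univ, Fintype.card_fin, nsmul_eq_mul] at hbd
    have h2 : ‖((n:ℝ)⁻¹)‖ = (n:ℝ)⁻¹ := by
      rw [Real.norm_eq_abs, abs_of_pos (by positivity)]
    rw [h2]
    have hv0 : (0:ℝ) ≤ ‖v s‖ := norm_nonneg _
    have hchain : (n:ℝ)⁻¹ * ‖∑ i : Fin n,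
        (gradient (f (π s i)) (W s ((i:ℕ)+1)) - gradient (f (π s i)) (w (s+1)))‖
        ≤ (n:ℝ)⁻¹ * ((n:ℝ) * (L * (η * n * ((5/4) * ‖v s‖)))) :=
      mul_le_mul_of_nonneg_left hbd (by positivity)
    have hid : (n:ℝ)⁻¹ * ((n:ℝ) * (L * (η * n * ((5/4) * ‖v s‖))))
        = (5/4) * (η * n * L) * ‖v s‖ := by field_simp
    rw [hid] at hchain
    exact sarah_A5 (by nlinarith [hchain]) hA hv0
  -- the per-epoch contraction
  have key : ∀ t : ℕ,
      P (w (t+2)) - Pstar + (η * ((n:ℝ)+1) / 16) * ‖v (t+1)‖^2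
      ≤ (1 - η * μ * ((n:ℝ)+1) / 2)
        * (P (w (t+1)) - Pstar + (η * ((n:ℝ)+1) / 16) * ‖v t‖^2) := by
    intro t
    set s := t + 1 with hs
    set m : ℝ := (n:ℝ) + 1 with hm
    have hm2 : (2:ℝ) ≤ m := by rw [hm]; linarith
    have hm0 : m ≠ 0 := by rw [hm]; positivity
    set G : EuclideanSpace ℝ (Fin d) := ∑ j ∈ Finset.range (n+1), V s j with hG
    set Gb : EuclideanSpace ℝ (Fin d) := m⁻¹ • G with hGb
    have hGm : G = m • Gb := by rw [hGb, smul_inv_smul₀ hm0]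
    have hstep : w (s+1) - w s = -((η*m) • Gb) := by
      rw [hGnext s, ← hG, hGm, smul_smul]
      abel
    -- bound ‖Gb - v s‖
    have hdg : ‖Gb - v s‖ ≤ (5/32) * ‖v s‖ := by
      have hsum : G - m • v s = ∑ j ∈ Finset.range (n+1), (V s j - v s) := by
        rw [hG, Finset.sum_sub_distrib, Finset.sum_const, Finset.card_range, hm]
        congr 1
        rw [← Nat.cast_smul_eq_nsmul ℝ]
        push_cast
        ring_nf
      have hGbv : Gb - v s = m⁻¹ • (G - m • v s) := by
        rw [hGb, smul_sub, smul_smul, inv_mul_cancel₀ hm0, one_smul]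
      rw [hGbv, hsum, norm_smul]
      have hbb : ‖∑ j ∈ Finset.range (n+1), (V s j - v s)‖
          ≤ ∑ j ∈ Finset.range (n+1), ((5/32) * ‖v s‖) := by
        refine (norm_sum_le _ _).trans (Finset.sum_le_sum fun j hj => ?_)
        exact hEVd s j (by have := Finset.mem_range.mp hj; omega)
      rw [Finset.sum_const, Finset.card_range, nsmul_eq_mul] at hbb
      have hminv : ‖(m⁻¹ : ℝ)‖ = m⁻¹ := by
        rw [Real.norm_eq_abs, abs_of_pos (by rw [hm]; positivity)]
      rw [hminv]
      have hcast : ((n+1 : ℕ):ℝ) = m := by rw [hm]; push_cast; ring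
      rw [hcast] at hbb
      calc m⁻¹ * ‖∑ j ∈ Finset.range (n+1), (V s j - v s)‖
          ≤ m⁻¹ * (m * ((5/32) * ‖v s‖)) :=
            mul_le_mul_of_nonneg_left hbb (by rw [hm]; positivity)
        _ = (5/32) * ‖v s‖ := by field_simp
    have he0 : ‖v s - gradient P (w s)‖ ≤ (5/32) * ‖v t‖ := hE t
    -- descent
    have hd := hub (w s) (w (s+1))
    rw [hstep] at hd
    rw [inner_neg_right, real_inner_smul_right] at hd
    have hnn : ‖-((η*m) • Gb)‖^2 = (η*m)^2 * ‖Gb‖^2 := by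
      rw [norm_neg, norm_smul, Real.norm_eq_abs,
        abs_of_pos (by rw [hm]; positivity : (0:ℝ) < η*m)]
      ring
    rw [hnn] at hd
    -- inner product identity
    have hip : ⟪gradient P (w s), Gb⟫
        = (‖gradient P (w s)‖^2 + ‖Gb‖^2 - ‖gradient P (w s) - Gb‖^2) / 2 := by
      have := norm_sub_sq_real (gradient P (w s)) Gb
      linarith
    -- real abbreviations
    set τ : ℝ := η * m with hτ
    have hτ0 : (0:ℝ) < τ := by rw [hτ, hm]; positivity
    have hτL : τ * L ≤ 1/4 := by
      rw [hτ, hm]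
      exact sarah_A7 hη0 hL hn1 hA
    have hτμ : τ * μ ≤ 1/4 := by
      have := mul_le_mul_of_nonneg_left hμL hτ0.le
      linarith
    set a : ℝ := ‖gradient P (w s)‖ with ha
    set gg : ℝ := ‖Gb‖ with hgg
    set b : ℝ := ‖v s‖ with hb
    set u : ℝ := ‖v t‖ with hu
    set e : ℝ := ‖v s - gradient P (w s)‖ with hee
    set dgv : ℝ := ‖Gb - v s‖ with hdgv
    have ha0 : 0 ≤ a := norm_nonneg _
    have hgg0 : 0 ≤ gg := norm_nonneg _
    have hb0 : 0 ≤ b := norm_nonneg _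
    have hu0 : 0 ≤ u := norm_nonneg _
    have he0' : 0 ≤ e := norm_nonneg _
    have hdgv0 : 0 ≤ dgv := norm_nonneg _
    have h3 : ‖gradient P (w s) - Gb‖ ≤ e + dgv := by
      calc ‖gradient P (w s) - Gb‖ ≤ ‖gradient P (w s) - v s‖ + ‖v s - Gb‖ :=
            norm_sub_le_norm_sub_add_norm_sub _ _ _
        _ = e + dgv := by
            rw [hee, hdgv, norm_sub_rev (gradient P (w s)) (v s), norm_sub_rev (v s) Gb]
    have h4 : b ≤ gg + dgv := by
      calc b = ‖Gb - (Gb - v s)‖ := by rw [hb]; congr 1; abel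
        _ ≤ gg + dgv := by
            rw [hgg, hdgv]
            exact (norm_sub_le _ _)
    have hPD := hDpos (w s)
    have hPL' := hPL (w s)
    have hd2 : P (w (s+1)) - Pstar ≤ (P (w s) - Pstar)
        - τ * ((a^2 + gg^2 - ‖gradient P (w s) - Gb‖^2)/2) + L/2 * (τ^2 * gg^2) := by
      rw [hip] at hd
      linarith [hd]
    have hgoal : (P (w (s+1)) - Pstar) + (τ/16) * b^2
        ≤ (1 - τ*μ/2) * ((P (w s) - Pstar) + (τ/16) * u^2) :=
      sarah_A6 hτ0 hμ hL hτL hτμ ha0 hgg0 hb0 hu0 he0' hdgv0 (norm_nonneg _)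
        hPD hd2 h3 h4 (by rw [hdgv, hb] at *; exact hdg) (by rw [hee, hu] at *; exact he0)
        (by rw [ha]; exact hPL')
    have hform : τ/16 = η * ((n:ℝ)+1) / 16 := by rw [hτ, hm]
    have hform2 : 1 - τ*μ/2 = 1 - η * μ * ((n:ℝ)+1) / 2 := by rw [hτ, hm]; ring
    rw [hform, hform2, hb, hu] at hgoal
    have hs2 : s + 1 = t + 2 := by omega
    rw [hs2] at hgoal
    exact hgoal
  -- final induction
  have hρ0 : (0:ℝ) ≤ 1 - η * μ * ((n:ℝ)+1) / 2 := by
    have h1 : η * ((n:ℝ)+1) * μ ≤ η * ((n:ℝ)+1) * L :=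
      mul_le_mul_of_nonneg_left hμL (by positivity)
    have h2 := sarah_A7 hη0 hL hn1 hA
    nlinarith [h1, h2]
  have main : ∀ T : ℕ,
      P (w (T+1)) - Pstar + (η * ((n:ℝ)+1) / 16) * ‖v T‖^2
      ≤ (1 - η * μ * ((n:ℝ)+1) / 2) ^ T
        * (P (w 1) - Pstar + (η * ((n:ℝ)+1) / 16) * ‖v 0‖^2) := by
    intro T
    induction T with
    | zero => simp
    | succ T ih =>
      have hk := key T
      calc P (w (T+2)) - Pstar + (η * ((n:ℝ)+1) / 16) * ‖v (T+1)‖^2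
          ≤ (1 - η * μ * ((n:ℝ)+1) / 2)
            * (P (w (T+1)) - Pstar + (η * ((n:ℝ)+1) / 16) * ‖v T‖^2) := hk
        _ ≤ (1 - η * μ * ((n:ℝ)+1) / 2)
            * ((1 - η * μ * ((n:ℝ)+1) / 2) ^ T
              * (P (w 1) - Pstar + (η * ((n:ℝ)+1) / 16) * ‖v 0‖^2)) :=
            mul_le_mul_of_nonneg_left ih hρ0
        _ = (1 - η * μ * ((n:ℝ)+1) / 2) ^ (T+1)
            * (P (w 1) - Pstar + (η * ((n:ℝ)+1) / 16) * ‖v 0‖^2) := by ring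
  intro S hS
  obtain ⟨T, rfl⟩ : ∃ T, S = T + 1 := ⟨S - 1, (Nat.succ_pred_eq_of_pos hS).symm⟩
  simpa using main T
end

section
/- (Theorem 2: one-epoch contraction of RR-SARAH.) Assume each f_i is convex, P is μ-strongly convex with minimizer w* and optimal value P*, the δ-similarity condition holds, and the step size satisfies 0 < η ≤ min(1/(8nL), 1/(8n²δ)). Fix any permutation π of {1,…,n} and any point w_s ∈ ℝ^d. Run one SARAH epoch with step size η, permutation π, start point w_s and initial direction ∇P(w_s), with epoch output w_{s+1}. Then P(w_{s+1}) − P* ≤ (1 − η·μ·(n+1)/2)·(P(w_s) − P*). -/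
open scoped RealInnerProductSpace
open InnerProductSpace

variable {E : Type*} [NormedAddCommGroup E] [InnerProductSpace ℝ E] [CompleteSpace E]

/-- directional derivative along a line, for a differentiable function. -/
lemma aux_hasDerivAt_line (g : E → ℝ) (hg : Differentiable ℝ g) (x v : E) (t : ℝ) :
    HasDerivAt (fun t : ℝ => g (x + t • v)) ⟪gradient g (x + t • v), v⟫ t := by
  have hline : HasDerivAt (fun t : ℝ => x + t • v) v t := by
    simpa using ((hasDerivAt_id t).smul_const v).const_add x
  have hFD := (hg (x + t • v)).hasGradientAt.hasFDerivAt
  have := hFD.comp_hasDerivAt t hline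
  simpa [InnerProductSpace.toDual_apply_apply, Function.comp_def] using this

/-- Descent lemma: quadratic upper bound from Lipschitz gradient. -/
lemma aux_descent (g : E → ℝ) (hg : Differentiable ℝ g) (L : ℝ) (hL : 0 ≤ L)
    (hLip : ∀ w₁ w₂, ‖gradient g w₁ - gradient g w₂‖ ≤ L * ‖w₁ - w₂‖) (x y : E) :
    g y ≤ g x + ⟪gradient g x, y - x⟫ + L / 2 * ‖y - x‖ ^ 2 := by
  set v := y - x with hv
  set φ : ℝ → ℝ := fun t => g (x + t • v) - t * ⟪gradient g x, v⟫ - L / 2 * ‖v‖ ^ 2 * t ^ 2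
    with hφ
  have hder : ∀ t : ℝ, HasDerivAt φ
      (⟪gradient g (x + t • v), v⟫ - ⟪gradient g x, v⟫ - L * ‖v‖ ^ 2 * t) t := by
    intro t
    have h1 := aux_hasDerivAt_line g hg x v t
    have h2 : HasDerivAt (fun t : ℝ => t * ⟪gradient g x, v⟫) ⟪gradient g x, v⟫ t := by
      simpa using (hasDerivAt_id t).mul_const ⟪gradient g x, v⟫
    have h3 : HasDerivAt (fun t : ℝ => L / 2 * ‖v‖ ^ 2 * t ^ 2) (L / 2 * ‖v‖ ^ 2 * (2 * t)) t := by
      simpa using ((hasDerivAt_pow 2 t).const_mul (L / 2 * ‖v‖ ^ 2))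
    have := (h1.sub h2).sub h3
    exact this.congr_deriv (by ring)
  have hmono : AntitoneOn φ (Set.Icc (0 : ℝ) 1) := by
    apply antitoneOn_of_deriv_nonpos (convex_Icc 0 1)
    · exact (Continuous.continuousOn (by
        have : Differentiable ℝ φ := fun t => (hder t).differentiableAt
        exact this.continuous))
    · intro t ht
      exact ((hder t).differentiableAt).differentiableWithinAt
    · intro t ht
      rw [interior_Icc] at ht
      rw [(hder t).deriv]
      have hineq : ⟪gradient g (x + t • v) - gradient g x, v⟫
          ≤ L * ‖v‖ ^ 2 * t := by
        calc ⟪gradient g (x + t • v) - gradient g x, v⟫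
            ≤ ‖gradient g (x + t • v) - gradient g x‖ * ‖v‖ := real_inner_le_norm _ _
          _ ≤ (L * ‖x + t • v - x‖) * ‖v‖ := by
              gcongr; exact hLip _ _
          _ = L * ‖v‖ ^ 2 * t := by
              rw [add_sub_cancel_left, norm_smul, Real.norm_eq_abs,
                abs_of_pos ht.1]
              ring
      rw [inner_sub_left] at hineq
      linarith
  have h01 : φ 1 ≤ φ 0 := hmono (by norm_num) (by norm_num) (by norm_num)
  have e0 : φ 0 = g x := by simp [hφ]
  have e1 : φ 1 = g y - ⟪gradient g x, v⟫ - L / 2 * ‖v‖ ^ 2 := by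
    simp [hφ, hv]
  rw [e0, e1] at h01
  linarith

/-- First-order condition for a differentiable convex function. -/
lemma aux_convex_lower (g : E → ℝ) (hg : Differentiable ℝ g)
    (hconv : ConvexOn ℝ Set.univ g) (x y : E) :
    g x + ⟪gradient g x, y - x⟫ ≤ g y := by
  set v := y - x with hv
  set ψ : ℝ → ℝ := fun t => g (x + t • v) with hψ
  have hψconv : ConvexOn ℝ Set.univ ψ := by
    have A : ConvexOn ℝ ((fun t : ℝ => x + t • v) ⁻¹' Set.univ)
        (g ∘ (AffineMap.lineMap x y : ℝ →ᵃ[ℝ] E)) := by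
      have := hconv.comp_affineMap (AffineMap.lineMap x y : ℝ →ᵃ[ℝ] E)
      simpa using this
    have : ConvexOn ℝ Set.univ (g ∘ (AffineMap.lineMap x y : ℝ →ᵃ[ℝ] E)) := by
      simpa using A
    convert this using 1
    funext t
    simp [hψ, AffineMap.lineMap_apply, hv]
    congr 1
    abel
  have hd0 : HasDerivAt ψ ⟪gradient g x, v⟫ 0 := by
    have := aux_hasDerivAt_line g hg x v 0
    simpa using this
  have htend := hasDerivAt_iff_tendsto_slope.1 hd0
  have htend' : Filter.Tendsto (slope ψ 0) (nhdsWithin 0 (Set.Ioi (0:ℝ)))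
      (nhds ⟪gradient g x, v⟫) :=
    htend.mono_left (nhdsWithin_mono _ (fun t ht => ne_of_gt ht))
  have hbound : ∀ᶠ t in nhdsWithin (0:ℝ) (Set.Ioi 0), slope ψ 0 t ≤ ψ 1 - ψ 0 := by
    filter_upwards [Ioo_mem_nhdsGT_of_mem (Set.left_mem_Ico.2 one_pos)] with t ht
    have hcv := hψconv.2 (Set.mem_univ (0:ℝ)) (Set.mem_univ (1:ℝ))
      (show (0:ℝ) ≤ 1 - t by linarith [ht.2]) (le_of_lt ht.1)
      (show (1 - t) + t = 1 by ring)
    simp only [smul_eq_mul, mul_zero, mul_one, zero_add] at hcv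
    rw [slope_def_field, sub_zero, div_le_iff₀ ht.1]
    nlinarith [hcv]
  have hle : ⟪gradient g x, v⟫ ≤ ψ 1 - ψ 0 :=
    le_of_tendsto htend' hbound
  have e0 : ψ 0 = g x := by simp [hψ]
  have e1 : ψ 1 = g y := by simp [hψ, hv]
  rw [e0, e1] at hle
  linarith

/-- First-order lower bound for a differentiable strongly convex function. -/
lemma aux_strong_lower (g : E → ℝ) (hg : Differentiable ℝ g) (μ : ℝ) (hμ : 0 < μ)
    (hsc : StrongConvexOn Set.univ μ g) (x y : E) :
    g x + ⟪gradient g x, y - x⟫ + μ / 2 * ‖y - x‖ ^ 2 ≤ g y := by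
  set Q : E → ℝ := fun w => g w - μ / 2 * ‖w‖ ^ 2 with hQ
  have hQconv : ConvexOn ℝ Set.univ Q := (strongConvexOn_iff_convex).1 hsc
  have hnsq : ∀ w : E, HasGradientAt (fun w : E => ‖w‖ ^ 2) ((2:ℝ) • w) w := by
    intro w
    have h := (hasStrictFDerivAt_norm_sq w).hasFDerivAt
    rw [hasFDerivAt_iff_hasGradientAt] at h
    convert h using 1
    have : ((InnerProductSpace.toDual ℝ E)) ((2:ℝ) • w) = 2 • (innerSL ℝ w) := by
      ext z
      simp [InnerProductSpace.toDual_apply_apply, inner_smul_left]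
    rw [← this, LinearIsometryEquiv.symm_apply_apply]
  have hQgrad : ∀ w : E, HasGradientAt Q (gradient g w - μ • w) w := by
    intro w
    have h1 : HasFDerivAt g (InnerProductSpace.toDual ℝ E (gradient g w)) w :=
      (hg w).hasGradientAt.hasFDerivAt
    have h2 : HasFDerivAt (fun w : E => ‖w‖ ^ 2)
        (InnerProductSpace.toDual ℝ E ((2:ℝ) • w)) w := (hnsq w).hasFDerivAt
    have h3 := h1.sub ((h2.const_mul (μ / 2)))
    rw [hasFDerivAt_iff_hasGradientAt] at h3
    convert h3 using 1
    · rfl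
    rw [← map_smul, ← map_sub, LinearIsometryEquiv.symm_apply_apply]
    congr 1
    rw [smul_smul]
    congr 1
    ring
  have hQdiff : Differentiable ℝ Q := fun w => (hQgrad w).differentiableAt
  have hlow := aux_convex_lower Q hQdiff hQconv x y
  rw [(hQgrad x).gradient] at hlow
  have hinner : ⟪gradient g x - μ • x, y - x⟫
      = ⟪gradient g x, y - x⟫ - μ * ⟪x, y - x⟫ := by
    rw [inner_sub_left, real_inner_smul_left]
  have hnorm : ‖y - x‖ ^ 2 = ‖y‖ ^ 2 - ‖x‖ ^ 2 - 2 * ⟪x, y - x⟫ := by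
    rw [inner_sub_right, @norm_sub_sq_real, real_inner_comm]
    ring_nf
    rw [real_inner_self_eq_norm_sq]
    ring
  simp only [hQ] at hlow
  rw [hinner] at hlow
  nlinarith [hlow, hnorm]

lemma aux_gradient_avg {n : ℕ} (f : Fin n → E → ℝ) (hdiff : ∀ i, Differentiable ℝ (f i)) (w : E) :
    HasGradientAt (fun w => (1/(n:ℝ)) * ∑ i, f i w) ((1/(n:ℝ)) • ∑ i, gradient (f i) w) w := by
  have hsum : HasFDerivAt (fun w => ∑ i, f i w)
      (∑ i, InnerProductSpace.toDual ℝ E (gradient (f i) w)) w :=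
    HasFDerivAt.fun_sum (fun i _ => ((hdiff i) w).hasGradientAt.hasFDerivAt)
  have h := hsum.const_mul (1/(n:ℝ))
  rw [hasFDerivAt_iff_hasGradientAt] at h
  convert h using 1
  rw [map_smul, map_sum]
  simp only [LinearIsometryEquiv.symm_apply_apply]

open scoped BigOperators

set_option maxHeartbeats 4000000 in
/-- Theorem 2: one-epoch contraction of RR-SARAH. -/
theorem rr_sarah_one_epoch_contraction
    {d n : ℕ} (hd : 1 ≤ d) (hn : 1 ≤ n)
    (f : Fin n → EuclideanSpace ℝ (Fin d) → ℝ)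
    (P : EuclideanSpace ℝ (Fin d) → ℝ)
    (hP : ∀ w, P w = (1 / (n : ℝ)) * ∑ i, f i w)
    (L μ δ η : ℝ) (hL : 0 < L) (hμ : 0 < μ) (hδ : 0 < δ)
    (hdiff : ∀ i, Differentiable ℝ (f i))
    (hconv : ∀ i, ConvexOn ℝ Set.univ (f i))
    (hLip : ∀ i w₁ w₂, ‖gradient (f i) w₁ - gradient (f i) w₂‖ ≤ L * ‖w₁ - w₂‖)
    (hsc : StrongConvexOn Set.univ μ P)
    (wstar : EuclideanSpace ℝ (Fin d)) (hmin : IsMinOn P Set.univ wstar)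
    (Pstar : ℝ) (hPstar : Pstar = P wstar)
    (hsim : ∀ i w₁ w₂,
      ‖(gradient (f i) w₁ - gradient P w₁) - (gradient (f i) w₂ - gradient P w₂)‖
        ≤ (δ / 2) * ‖w₁ - w₂‖)
    (hη0 : 0 < η)
    (hη : η ≤ min (1 / (8 * n * L)) (1 / (8 * n ^ 2 * δ)))
    (π : Equiv.Perm (Fin n))
    (ws : EuclideanSpace ℝ (Fin d))
    -- one SARAH epoch: start point `ws`, initial direction `∇P(ws)`, permutation `π`
    (W V : ℕ → EuclideanSpace ℝ (Fin d))
    (hW0 : W 0 = ws) (hV0 : V 0 = gradient P ws)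
    (hWrec : ∀ i : Fin n, W ((i : ℕ) + 1) = W i - η • V i)
    (hVrec : ∀ i : Fin n, V ((i : ℕ) + 1)
      = V i + gradient (f (π i)) (W ((i : ℕ) + 1)) - gradient (f (π i)) (W i))
    (wnext : EuclideanSpace ℝ (Fin d)) (hwnext : wnext = W n - η • V n) :
    P wnext - Pstar ≤ (1 - η * μ * ((n : ℝ) + 1) / 2) * (P ws - Pstar) := by
  have hnpos : (0:ℝ) < n := by exact_mod_cast hn
  have hn1 : (1:ℝ) ≤ n := by exact_mod_cast hn
  -- gradient of P
  have hgradP : ∀ w, HasGradientAt P ((1/(n:ℝ)) • ∑ i, gradient (f i) w) w := by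
    intro w
    exact (aux_gradient_avg f hdiff w).congr_of_eventuallyEq
      (Filter.Eventually.of_forall hP)
  have hgP : ∀ w, gradient P w = (1/(n:ℝ)) • ∑ i, gradient (f i) w :=
    fun w => (hgradP w).gradient
  have hdP : Differentiable ℝ P := fun w => (hgradP w).differentiableAt
  -- Lipschitz gradient of P
  have hPLip : ∀ w₁ w₂, ‖gradient P w₁ - gradient P w₂‖ ≤ L * ‖w₁ - w₂‖ := by
    intro w₁ w₂
    rw [hgP, hgP, ← smul_sub, ← Finset.sum_sub_distrib, norm_smul]
    have h1 : ‖∑ i, (gradient (f i) w₁ - gradient (f i) w₂)‖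
        ≤ ∑ i : Fin n, (L * ‖w₁ - w₂‖) := by
      refine (norm_sum_le _ _).trans ?_
      exact Finset.sum_le_sum (fun i _ => hLip i w₁ w₂)
    rw [Finset.sum_const, Finset.card_univ, Fintype.card_fin, nsmul_eq_mul] at h1
    have : ‖(1/(n:ℝ))‖ = 1/(n:ℝ) := by
      rw [Real.norm_eq_abs, abs_of_pos (by positivity)]
    rw [this]
    calc 1/(n:ℝ) * ‖∑ i, (gradient (f i) w₁ - gradient (f i) w₂)‖
        ≤ 1/(n:ℝ) * ((n:ℝ) * (L * ‖w₁ - w₂‖)) := by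
          apply mul_le_mul_of_nonneg_left h1 (by positivity)
      _ = L * ‖w₁ - w₂‖ := by field_simp
  -- PL inequality
  have hPL : ∀ x, 2*μ*(P x - Pstar) ≤ ‖gradient P x‖^2 := by
    intro x
    have hlow := aux_strong_lower P hdP μ hμ hsc x wstar
    rw [← hPstar] at hlow
    have hip : -(‖gradient P x‖ * ‖wstar - x‖) ≤ ⟪gradient P x, wstar - x⟫_ℝ := by
      have h := real_inner_le_norm (gradient P x) (x - wstar)
      have he : ⟪gradient P x, x - wstar⟫_ℝ = -⟪gradient P x, wstar - x⟫_ℝ := by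
        rw [← inner_neg_right]
        congr 1
        abel
      rw [he, norm_sub_rev] at h
      linarith
    nlinarith [sq_nonneg (‖gradient P x‖ - μ * ‖wstar - x‖), norm_nonneg (wstar - x),
      norm_nonneg (gradient P x)]
  have hΔ : 0 ≤ P ws - Pstar := by
    have := hmin (Set.mem_univ ws)
    simp only [Set.mem_setOf_eq] at this
    rw [hPstar]
    linarith [this]
  -- one-step descent
  have hstep : ∀ x v : EuclideanSpace ℝ (Fin d), P (x - η • v)
      ≤ P x - η/2*‖gradient P x‖^2 - η/2*(1-L*η)*‖v‖^2
        + η/2*‖v - gradient P x‖^2 := by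
    intro x v
    have hdes := aux_descent P hdP L hL.le hPLip x (x - η • v)
    have he : x - η • v - x = -(η • v) := by abel
    rw [he, inner_neg_right, real_inner_smul_right, norm_neg, norm_smul,
      Real.norm_eq_abs, abs_of_pos hη0] at hdes
    have hpol : ‖v - gradient P x‖^2
        = ‖v‖^2 - 2*⟪gradient P x, v⟫_ℝ + ‖gradient P x‖^2 := by
      rw [@norm_sub_sq_real, real_inner_comm]
    nlinarith [hdes, hpol]
  -- iterate-level recursions with ℕ indices
  have hWrec' : ∀ k, k < n → W (k+1) = W k - η • V k := by
    intro k hk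
    exact hWrec ⟨k, hk⟩
  have hVrec' : ∀ k, (hk : k < n) → V (k+1)
      = V k + gradient (f (π ⟨k, hk⟩)) (W (k+1)) - gradient (f (π ⟨k, hk⟩)) (W k) := by
    intro k hk
    exact hVrec ⟨k, hk⟩
  -- Claim A: accumulated descent
  have claimA : ∀ k, k ≤ n → P (W k) + (η/2) * ∑ j ∈ Finset.range k,
      (‖gradient P (W j)‖^2 + (1-L*η)*‖V j‖^2 - ‖V j - gradient P (W j)‖^2) ≤ P ws := by
    intro k
    induction k with
    | zero => intro _; simp [hW0]
    | succ k ih =>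
      intro hk1
      have hk : k < n := hk1
      have hWs := hWrec' k hk
      have hstepk := hstep (W k) (V k)
      rw [← hWs] at hstepk
      have hind := ih (le_of_lt hk)
      rw [Finset.sum_range_succ]
      linarith [hstepk, hind]
  have claimTot : P wnext + (η/2) * ∑ j ∈ Finset.range (n+1),
      (‖gradient P (W j)‖^2 + (1-L*η)*‖V j‖^2 - ‖V j - gradient P (W j)‖^2) ≤ P ws := by
    have hWn := hstep (W n) (V n)
    rw [← hwnext] at hWn
    rw [Finset.sum_range_succ]
    linarith [claimA n le_rfl, hWn]
  -- Claim B: SARAH error control via similarity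
  have claimB : ∀ k, k ≤ n → ‖V k - gradient P (W k)‖
      ≤ (δ*η/2) * ∑ j ∈ Finset.range k, ‖V j‖ := by
    intro k
    induction k with
    | zero => intro _; simp [hV0, hW0]
    | succ k ih =>
      intro hk1
      have hk : k < n := hk1
      have hWs := hWrec' k hk
      have hVs := hVrec' k hk
      have key : V (k+1) - gradient P (W (k+1))
          = (V k - gradient P (W k))
            + ((gradient (f (π ⟨k, hk⟩)) (W (k+1)) - gradient P (W (k+1)))
              - (gradient (f (π ⟨k, hk⟩)) (W k) - gradient P (W k))) := by
        rw [hVs]; abel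
      have hsimk := hsim (π ⟨k, hk⟩) (W (k+1)) (W k)
      have hdist : ‖W (k+1) - W k‖ = η * ‖V k‖ := by
        rw [hWs]
        have : W k - η • V k - W k = -(η • V k) := by abel
        rw [this, norm_neg, norm_smul, Real.norm_eq_abs, abs_of_pos hη0]
      rw [Finset.sum_range_succ]
      calc ‖V (k+1) - gradient P (W (k+1))‖
          ≤ ‖V k - gradient P (W k)‖
            + ‖(gradient (f (π ⟨k, hk⟩)) (W (k+1)) - gradient P (W (k+1)))
              - (gradient (f (π ⟨k, hk⟩)) (W k) - gradient P (W k))‖ := by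
            rw [key]; exact norm_add_le _ _
        _ ≤ (δ*η/2) * ∑ j ∈ Finset.range k, ‖V j‖ + (δ/2) * (η * ‖V k‖) := by
            rw [← hdist]
            exact add_le_add (ih (le_of_lt hk)) hsimk
        _ = (δ*η/2) * (∑ j ∈ Finset.range k, ‖V j‖ + ‖V k‖) := by ring
  -- Claim C: distance to start
  have claimC : ∀ k, k ≤ n → ‖W k - ws‖ ≤ η * ∑ j ∈ Finset.range k, ‖V j‖ := by
    intro k
    induction k with
    | zero => intro _; simp [hW0]
    | succ k ih =>
      intro hk1
      have hk : k < n := hk1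
      have hWs := hWrec' k hk
      have key : W (k+1) - ws = (W k - ws) - η • V k := by rw [hWs]; abel
      rw [Finset.sum_range_succ]
      calc ‖W (k+1) - ws‖ ≤ ‖W k - ws‖ + ‖η • V k‖ := by
            rw [key]; exact norm_sub_le _ _
        _ ≤ η * ∑ j ∈ Finset.range k, ‖V j‖ + η * ‖V k‖ := by
            rw [norm_smul, Real.norm_eq_abs, abs_of_pos hη0]
            exact add_le_add (ih (le_of_lt hk)) le_rfl
        _ = η * (∑ j ∈ Finset.range k, ‖V j‖ + ‖V k‖) := by ring
  -- total squared norm of directions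
  set S : ℝ := ∑ j ∈ Finset.range (n+1), ‖V j‖^2 with hS
  have hS0 : 0 ≤ S := Finset.sum_nonneg (fun j _ => sq_nonneg _)
  -- Cauchy-Schwarz bound
  have hCS : ∀ k, k ≤ n → (∑ j ∈ Finset.range k, ‖V j‖)^2 ≤ (n:ℝ) * S := by
    intro k hk
    have h1 : (∑ j ∈ Finset.range k, ‖V j‖)^2
        ≤ (k:ℝ) * ∑ j ∈ Finset.range k, ‖V j‖^2 := by
      have := sq_sum_le_card_mul_sum_sq (s := Finset.range k) (f := fun j => ‖V j‖)
      simpa [Finset.card_range] using this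
    have h2 : ∑ j ∈ Finset.range k, ‖V j‖^2 ≤ S := by
      apply Finset.sum_le_sum_of_subset_of_nonneg
      · exact Finset.range_subset_range.2 (by omega)
      · intro j _ _; exact sq_nonneg _
    calc (∑ j ∈ Finset.range k, ‖V j‖)^2
        ≤ (k:ℝ) * ∑ j ∈ Finset.range k, ‖V j‖^2 := h1
      _ ≤ (n:ℝ) * S := by
          apply mul_le_mul (by exact_mod_cast hk) h2
            (Finset.sum_nonneg (fun j _ => sq_nonneg _)) (by positivity)
  -- per-index error bound
  have hc_bd : ∀ k, k ≤ n → ‖V k - gradient P (W k)‖^2 ≤ (δ*η/2)^2 * ((n:ℝ)*S) := by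
    intro k hk
    have h1 := claimB k hk
    have h2 := hCS k hk
    have hnn : 0 ≤ ∑ j ∈ Finset.range k, ‖V j‖ :=
      Finset.sum_nonneg (fun j _ => norm_nonneg _)
    have hcoef : 0 ≤ δ*η/2 := by positivity
    calc ‖V k - gradient P (W k)‖^2 ≤ ((δ*η/2) * ∑ j ∈ Finset.range k, ‖V j‖)^2 := by
          apply sq_le_sq' _ h1
          · linarith [norm_nonneg (V k - gradient P (W k)), mul_nonneg hcoef hnn]
      _ = (δ*η/2)^2 * (∑ j ∈ Finset.range k, ‖V j‖)^2 := by ring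
      _ ≤ (δ*η/2)^2 * ((n:ℝ)*S) := by
          apply mul_le_mul_of_nonneg_left h2 (by positivity)
  -- sum of errors
  have hsumc : ∑ k ∈ Finset.range (n+1), ‖V k - gradient P (W k)‖^2
      ≤ ((n:ℝ)+1) * ((δ*η/2)^2 * ((n:ℝ)*S)) := by
    calc ∑ k ∈ Finset.range (n+1), ‖V k - gradient P (W k)‖^2
        ≤ ∑ _k ∈ Finset.range (n+1), (δ*η/2)^2 * ((n:ℝ)*S) := by
          apply Finset.sum_le_sum
          intro k hk
          exact hc_bd k (by simpa [Nat.lt_succ_iff] using hk)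
      _ = ((n:ℝ)+1) * ((δ*η/2)^2 * ((n:ℝ)*S)) := by
          rw [Finset.sum_const, Finset.card_range, nsmul_eq_mul]
          push_cast
          ring
  -- gradient sum lower bound
  have ha0_bd : ∀ k, k ≤ n → ‖gradient P ws‖^2
      ≤ 2*‖gradient P (W k)‖^2 + 2*L^2*(η^2*((n:ℝ)*S)) := by
    intro k hk
    have htri : ‖gradient P ws‖ ≤ ‖gradient P (W k)‖ + L * ‖W k - ws‖ := by
      have h1 : ‖gradient P ws‖ ≤ ‖gradient P (W k)‖ + ‖gradient P ws - gradient P (W k)‖ := by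
        have := norm_add_le (gradient P (W k)) (gradient P ws - gradient P (W k))
        simpa using this
      have h2 : ‖gradient P ws - gradient P (W k)‖ ≤ L * ‖W k - ws‖ := by
        calc ‖gradient P ws - gradient P (W k)‖ ≤ L * ‖ws - W k‖ := hPLip ws (W k)
          _ = L * ‖W k - ws‖ := by rw [norm_sub_rev]
      linarith
    have hd2 : ‖W k - ws‖^2 ≤ η^2*((n:ℝ)*S) := by
      have h1 := claimC k hk
      have h2 := hCS k hk
      have hnn : 0 ≤ ∑ j ∈ Finset.range k, ‖V j‖ :=
        Finset.sum_nonneg (fun j _ => norm_nonneg _)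
      calc ‖W k - ws‖^2 ≤ (η * ∑ j ∈ Finset.range k, ‖V j‖)^2 := by
            apply sq_le_sq' _ h1
            linarith [norm_nonneg (W k - ws), mul_nonneg hη0.le hnn]
        _ = η^2 * (∑ j ∈ Finset.range k, ‖V j‖)^2 := by ring
        _ ≤ η^2*((n:ℝ)*S) := by
            apply mul_le_mul_of_nonneg_left h2 (by positivity)
    have hsq : ‖gradient P ws‖^2 ≤ (‖gradient P (W k)‖ + L*‖W k - ws‖)^2 := by
      apply sq_le_sq' _ htri
      have := norm_nonneg (gradient P ws)
      have := norm_nonneg (gradient P (W k))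
      have := mul_nonneg hL.le (norm_nonneg (W k - ws))
      linarith
    have h3 : L^2 * ‖W k - ws‖^2 ≤ L^2 * (η^2*((n:ℝ)*S)) :=
      mul_le_mul_of_nonneg_left hd2 (sq_nonneg L)
    nlinarith [hsq, h3, sq_nonneg (‖gradient P (W k)‖ - L*‖W k - ws‖)]
  have hsuma : ((n:ℝ)+1) * ‖gradient P ws‖^2
      ≤ 2 * ∑ k ∈ Finset.range (n+1), ‖gradient P (W k)‖^2
        + ((n:ℝ)+1) * (2*L^2*(η^2*((n:ℝ)*S))) := by
    have h := Finset.sum_le_sum (f := fun _ : ℕ => ‖gradient P ws‖^2)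
      (g := fun k => 2*‖gradient P (W k)‖^2 + 2*L^2*(η^2*((n:ℝ)*S)))
      (s := Finset.range (n+1))
      (fun k hk => ha0_bd k (by simpa [Nat.lt_succ_iff] using hk))
    rw [Finset.sum_const, Finset.card_range, nsmul_eq_mul, Finset.sum_add_distrib,
      Finset.sum_const, Finset.card_range, nsmul_eq_mul, ← Finset.mul_sum] at h
    push_cast at h ⊢
    linarith [h]
  -- step size consequences
  have h8nL : (0:ℝ) < 8*(n:ℝ)*L := by positivity
  have h8nd : (0:ℝ) < 8*(n:ℝ)^2*δ := by positivity
  have hη1 : η * (8*(n:ℝ)*L) ≤ 1 := by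
    have h := (le_min_iff.1 hη).1
    rw [le_div_iff₀ h8nL] at h
    exact h
  have hη2 : η * (8*(n:ℝ)^2*δ) ≤ 1 := by
    have h := (le_min_iff.1 hη).2
    rw [le_div_iff₀ h8nd] at h
    exact h
  have hLη : L*η ≤ 1/8 := by nlinarith [hη1, hn1, mul_pos hL hη0]
  -- split the telescoped sum
  have hsplit : (∑ j ∈ Finset.range (n+1),
      (‖gradient P (W j)‖^2 + (1-L*η)*‖V j‖^2 - ‖V j - gradient P (W j)‖^2))
      = (∑ j ∈ Finset.range (n+1), ‖gradient P (W j)‖^2) + (1-L*η)*S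
        - (∑ j ∈ Finset.range (n+1), ‖V j - gradient P (W j)‖^2) := by
    rw [Finset.sum_sub_distrib, Finset.sum_add_distrib, ← Finset.mul_sum, hS]
  -- error coefficient bound
  have hu : (0:ℝ) ≤ δ*η := by positivity
  have hprod : (η*(8*(n:ℝ)^2*δ)) * (η*(8*(n:ℝ)^2*δ)) ≤ 1 := by
    nlinarith [hη2, mul_nonneg hη0.le (le_of_lt h8nd)]
  have h64d : 64*(n:ℝ)^4*(δ*η)^2 ≤ 1 := by nlinarith [hprod]
  have hnsq : (1:ℝ) ≤ (n:ℝ)^2 := by nlinarith [hn1]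
  have hn_le_sq : (n:ℝ) ≤ (n:ℝ)^2 := by nlinarith [hn1]
  have hsq_le_4 : (n:ℝ)^2 ≤ (n:ℝ)^4 := by nlinarith [hnsq, sq_nonneg (n:ℝ)]
  have hnn4 : (n:ℝ)*((n:ℝ)+1) ≤ 2*(n:ℝ)^4 := by nlinarith [hn_le_sq, hsq_le_4]
  have hq : (n:ℝ)*((n:ℝ)+1)*(δ*η)^2 ≤ 2*(n:ℝ)^4*(δ*η)^2 :=
    mul_le_mul_of_nonneg_right hnn4 (sq_nonneg _)
  have hcoefC : ((n:ℝ)+1)*((δ*η/2)^2*(n:ℝ)) ≤ 1/128 := by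
    have he : ((n:ℝ)+1)*((δ*η/2)^2*(n:ℝ)) = (n:ℝ)*((n:ℝ)+1)*(δ*η)^2/4 := by ring
    rw [he]
    nlinarith [hq, h64d]
  have hC_bd : (∑ j ∈ Finset.range (n+1), ‖V j - gradient P (W j)‖^2) ≤ (1/128)*S := by
    calc (∑ j ∈ Finset.range (n+1), ‖V j - gradient P (W j)‖^2)
        ≤ ((n:ℝ)+1) * ((δ*η/2)^2 * ((n:ℝ)*S)) := hsumc
      _ = (((n:ℝ)+1)*((δ*η/2)^2*(n:ℝ)))*S := by ring
      _ ≤ (1/128)*S := mul_le_mul_of_nonneg_right hcoefC hS0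
  -- gradient sum coefficient bound
  have hprodL : (η*(8*(n:ℝ)*L)) * (η*(8*(n:ℝ)*L)) ≤ 1 := by
    nlinarith [hη1, mul_nonneg hη0.le (le_of_lt h8nL)]
  have h64L : 64*(n:ℝ)^2*L^2*η^2 ≤ 1 := by nlinarith [hprodL]
  have hnn2 : (n:ℝ)*((n:ℝ)+1) ≤ 2*(n:ℝ)^2 := by nlinarith [hn_le_sq]
  have hqL : (n:ℝ)*((n:ℝ)+1)*(L*η)^2 ≤ 2*(n:ℝ)^2*(L*η)^2 :=
    mul_le_mul_of_nonneg_right hnn2 (sq_nonneg _)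
  have hT2 : ((n:ℝ)+1)*L^2*η^2*(n:ℝ) ≤ 1/32 := by
    have he : ((n:ℝ)+1)*L^2*η^2*(n:ℝ) = (n:ℝ)*((n:ℝ)+1)*(L*η)^2 := by ring
    rw [he]
    nlinarith [hqL, h64L]
  have hA_low : (∑ j ∈ Finset.range (n+1), ‖gradient P (W j)‖^2)
      ≥ ((n:ℝ)+1)/2*‖gradient P ws‖^2 - (((n:ℝ)+1)*L^2*η^2*(n:ℝ))*S := by
    nlinarith [hsuma]
  -- combine
  have h78 : (7/8)*S ≤ (1-L*η)*S := mul_le_mul_of_nonneg_right (by linarith) hS0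
  have ht2S : (((n:ℝ)+1)*L^2*η^2*(n:ℝ))*S ≤ (1/32)*S := mul_le_mul_of_nonneg_right hT2 hS0
  have hkey : ((n:ℝ)+1)/2*‖gradient P ws‖^2
      ≤ (∑ j ∈ Finset.range (n+1), ‖gradient P (W j)‖^2) + (1-L*η)*S
        - (∑ j ∈ Finset.range (n+1), ‖V j - gradient P (W j)‖^2) := by
    linarith [hA_low, hC_bd, h78, ht2S, hS0]
  have hη2pos : (0:ℝ) ≤ η/2 := by positivity
  have hmain : P wnext + (η/2)*(((n:ℝ)+1)/2*‖gradient P ws‖^2) ≤ P ws := by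
    have h1 := claimTot
    rw [hsplit] at h1
    have h2 := mul_le_mul_of_nonneg_left hkey hη2pos
    linarith
  have hPLws := hPL ws
  have hfac : (0:ℝ) ≤ η*((n:ℝ)+1)/4 := by positivity
  have hmul := mul_le_mul_of_nonneg_left hPLws hfac
  have hrhs : (1 - η*μ*((n:ℝ)+1)/2) * (P ws - Pstar)
      = (P ws - Pstar) - η*((n:ℝ)+1)/4*(2*μ*(P ws - Pstar)) := by ring
  rw [hrhs]
  have hid : (η/2)*(((n:ℝ)+1)/2*‖gradient P ws‖^2) = η*((n:ℝ)+1)/4*‖gradient P ws‖^2 := by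
    ring
  rw [hid] at hmain
  linarith [hmain, hmul]
end
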